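/- arXiv:1906.10093 — 4 statements merged into one kernel-verified Lean document; each statement's English description precedes it below -/
import Mathlib

section
/- Let D be an accepting recurrent SCC of B, let d = ⟨q,s⟩ ∈ D, and let w ∈ S* be such that d⇒w is defined, d ∈ d⇒w, and d⇒w is a cut. Then for every d′ ∈ Co(d) with d′ ≠ d, the fibre d′⇒w is empty. -/
open Matrix MeasureTheory

attribute [local instance] Classical.propDecidable

/-- A Büchi automaton with state space `Q` and alphabet `A`. -/
structure BA (Q A : Type) where
  delta : Q → A → Set Q
  init : Set Q
  acc : Set Q

namespace BA

variable {Q A : Type}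

/-- A run of the automaton on an infinite word. -/
def InfRun (𝒜 : BA Q A) (w : ℕ → A) (ρ : ℕ → Q) : Prop :=
  ρ 0 ∈ 𝒜.init ∧ ∀ i, ρ (i + 1) ∈ 𝒜.delta (ρ i) (w i)

/-- An accepting run: some accepting state occurs infinitely often. -/
def AccRun (𝒜 : BA Q A) (w : ℕ → A) (ρ : ℕ → Q) : Prop :=
  𝒜.InfRun w ρ ∧ ∃ q ∈ 𝒜.acc, {i : ℕ | ρ i = q}.Infinite

/-- The language of infinite words having at least one accepting run. -/
def Lang (𝒜 : BA Q A) : Set (ℕ → A) := {w | ∃ ρ, 𝒜.AccRun w ρ}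

/-- Unambiguous: every infinite word has at most one accepting run. -/
def Unambiguous (𝒜 : BA Q A) : Prop :=
  ∀ w ρ₁ ρ₂, 𝒜.AccRun w ρ₁ → 𝒜.AccRun w ρ₂ → ρ₁ = ρ₂

/-- `𝒜.IsRun q w ρ r` : the list `ρ` (of length `|w| + 1`) is a run for the
finite word `w` from `q` to `r`. -/
def IsRun (𝒜 : BA Q A) : Q → List A → List Q → Q → Prop
  | q, [], ρ, r => q = r ∧ ρ = [q]
  | q, a :: w, ρ, r => ∃ q' ρ', ρ = q :: ρ' ∧ q' ∈ 𝒜.delta q a ∧ 𝒜.IsRun q' w ρ' r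

/-- A diamond: two distinct runs for the same finite word with the
same start and end states. -/
def HasDiamond (𝒜 : BA Q A) : Prop :=
  ∃ q r w ρ₁ ρ₂, ρ₁ ≠ ρ₂ ∧ 𝒜.IsRun q w ρ₁ r ∧ 𝒜.IsRun q w ρ₂ r

/-- Every state is reachable from some initial state. -/
def AllReachable (𝒜 : BA Q A) : Prop :=
  ∀ q, ∃ q₀ ∈ 𝒜.init, ∃ w ρ, 𝒜.IsRun q₀ w ρ q

/-- The automaton `𝒜` with `q` as the only initial state. -/
def fromState (𝒜 : BA Q A) (q : Q) : BA Q A := { 𝒜 with init := {q} }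

/-- `|δ|`: the number of pairs `(q, r)` such that `r ∈ δ(q, a)` for some letter `a`. -/
noncomputable def numTrans (𝒜 : BA Q A) : ℕ := {p : Q × Q | ∃ a, p.2 ∈ 𝒜.delta p.1 a}.ncard

end BA

/-- A (row-)stochastic matrix with nonnegative entries. -/
def IsMarkov {S : Type} [Fintype S] (M : Matrix S S ℝ) : Prop :=
  (∀ s t, 0 ≤ M s t) ∧ ∀ s, ∑ t, M s t = 1

/-- `Pr s` is the probability measure of the Markov chain `M` started at `s`:
the cylinder of the finite sequence `u 0, …, u n` has measure
`M (u 0) (u 1) ⋯ M (u (n-1)) (u n)` if `u 0 = s`, and `0` otherwise. -/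
def CylinderSpec {S : Type} [Fintype S] [MeasurableSpace S]
    (M : Matrix S S ℝ) (Pr : S → Measure (ℕ → S)) : Prop :=
  ∀ (s : S) (n : ℕ) (u : ℕ → S),
    Pr s {ω | ∀ i ≤ n, ω i = u i} =
      if u 0 = s then ENNReal.ofReal (∏ i ∈ Finset.range n, M (u i) (u (i + 1))) else 0

/-- The vector `z`, given by `z ⟨q, s⟩ = Pr_s (L(𝒜_q))`. -/
noncomputable def zvec {Q S : Type} [MeasurableSpace S]
    (𝒜 : BA Q S) (Pr : S → Measure (ℕ → S)) : Q × S → ℝ :=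
  fun p => ((Pr p.2) ((𝒜.fromState p.1).Lang)).toReal

/-- The matrix `B` built from the automaton `𝒜` and the Markov chain `M`. -/
noncomputable def Bmat {Q S : Type} (𝒜 : BA Q S) (M : Matrix S S ℝ) :
    Matrix (Q × S) (Q × S) ℝ :=
  Matrix.of fun p p' => if p'.1 ∈ 𝒜.delta p.1 p.2 then M p.2 p'.2 else 0

/-- The spectral radius of a real square matrix: the largest absolute value of
its complex eigenvalues. -/
noncomputable def specRad {n : Type} [Fintype n] [DecidableEq n] (N : Matrix n n ℝ) : ℝ :=
  sSup {x : ℝ | ∃ c ∈ spectrum ℂ (N.map Complex.ofReal), x = ‖c‖}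

/-- `D` is a strongly connected component of the graph of the nonnegative matrix `N`
(edges are the positive entries). -/
def IsSCC {V : Type} (N : Matrix V V ℝ) (D : Set V) : Prop :=
  ∃ v, D = {w | Relation.ReflTransGen (fun a b => 0 < N a b) v w ∧
               Relation.ReflTransGen (fun a b => 0 < N a b) w v}

/-- The submatrix `N_{D,D}`. -/
def subMat {V : Type} (N : Matrix V V ℝ) (D : Set V) : Matrix ↥D ↥D ℝ :=
  N.submatrix (Subtype.val) (Subtype.val)

/-- An SCC `D` of `B` is recurrent if `ρ(B_{D,D}) = 1`. -/
def RecurrentSCC {Q S : Type} [Fintype Q] [Fintype S]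
    (𝒜 : BA Q S) (M : Matrix S S ℝ) (D : Set (Q × S)) : Prop :=
  specRad (subMat (Bmat 𝒜 M) D) = 1

/-- An SCC `D` of `B` is accepting if it contains a pair `⟨q, s⟩` with `q` accepting. -/
def AcceptingSCC {Q S : Type} (𝒜 : BA Q S) (D : Set (Q × S)) : Prop :=
  ∃ p ∈ D, p.1 ∈ 𝒜.acc

/-- One step of the fibre operation: `f ⇒ t`. -/
def fibStep {Q S : Type} (𝒜 : BA Q S) (D : Set (Q × S)) (f : Set (Q × S)) (t : S) :
    Set (Q × S) :=
  {p ∈ D | p.2 = t ∧ ∃ e ∈ f, p.1 ∈ 𝒜.delta e.1 e.2}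

/-- The fibre operation along a word: `f ⇒ w`. -/
def fibRun {Q S : Type} (𝒜 : BA Q S) (D : Set (Q × S)) (f : Set (Q × S)) :
    List S → Set (Q × S)
  | [] => f
  | t :: w => fibRun 𝒜 D (fibStep 𝒜 D f t) w

/-- A word `s₁ ⋯ sₙ` is enabled if `M_{sᵢ, sᵢ₊₁} > 0` for all `i < n`. -/
def Enabled {S : Type} (M : Matrix S S ℝ) (l : List S) : Prop :=
  l.Chain' fun a b => 0 < M a b

/-- `c` is a cut: `c = d ⇒ v` for some `d ∈ D` and enabled `v`, and `c ⇒ w`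
is nonempty for every `w` for which it is defined. -/
def IsCut {Q S : Type} (𝒜 : BA Q S) (M : Matrix S S ℝ) (D : Set (Q × S))
    (c : Set (Q × S)) : Prop :=
  ∃ d ∈ D, ∃ v : List S, Enabled M (d.2 :: v) ∧ c = fibRun 𝒜 D {d} v ∧
    ∀ w : List S, Enabled M (v.getLastD d.2 :: w) → fibRun 𝒜 D c w ≠ ∅

/-- The co-reachability set `Co(d)`: those `e ∈ D` with `{d, e} ⊆ d ⇒ w` for some `w`. -/
def Co {Q S : Type} (𝒜 : BA Q S) (M : Matrix S S ℝ) (D : Set (Q × S)) (d : Q × S) :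
    Set (Q × S) :=
  {e ∈ D | ∃ w : List S, Enabled M (d.2 :: w) ∧
    d ∈ fibRun 𝒜 D {d} w ∧ e ∈ fibRun 𝒜 D {d} w}

/-- The matrix `Δ(t)` over `D`. -/
noncomputable def Delta {Q S : Type} (𝒜 : BA Q S) (M : Matrix S S ℝ) (D : Set (Q × S))
    (t : S) : Matrix ↥D ↥D ℝ :=
  Matrix.of fun p p' =>
    if (p' : Q × S).2 = t ∧ 0 < M (p : Q × S).2 t ∧
       (p' : Q × S).1 ∈ 𝒜.delta (p : Q × S).1 (p : Q × S).2
    then 1 else 0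

/-- The matrix `Δ(w)` for a word `w` (`Δ(ε)` is the identity). -/
noncomputable def DeltaW {Q S : Type} [Fintype Q] [Fintype S]
    (𝒜 : BA Q S) (M : Matrix S S ℝ) (D : Set (Q × S)) : List S → Matrix ↥D ↥D ℝ
  | [] => 1
  | t :: w => Delta 𝒜 M D t * DeltaW 𝒜 M D w

/-- The matrix `Δ′(t)` over `D`. -/
noncomputable def Delta' {Q S : Type} (D : Set (Q × S)) (t : S) : Matrix ↥D ↥D ℝ :=
  Matrix.of fun p p' => if p = p' ∧ (p : Q × S).2 = t then 1 else 0

/-- The vector space `V(s)` spanned by the vectors `Δ′(s) Δ(w) y` for all words `w`. -/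
noncomputable def Vspace {Q S : Type} [Fintype Q] [Fintype S]
    (𝒜 : BA Q S) (M : Matrix S S ℝ) (D : Set (Q × S)) (y : ↥D → ℝ) (s : S) :
    Submodule ℝ (↥D → ℝ) :=
  Submodule.span ℝ {x : ↥D → ℝ | ∃ w : List S, x = (Delta' D s * DeltaW 𝒜 M D w).mulVec y}

/-- A vector `μ ∈ ℝ^D` is a fibre over `s` if it vanishes outside `Q × {s}`. -/
def IsFibreVec {Q S : Type} (D : Set (Q × S)) (μ : ↥D → ℝ) (s : S) : Prop :=
  ∀ p : ↥D, (p : Q × S).2 ≠ s → μ p = 0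

/-- A pseudo-cut over `s` (with respect to the vector `zD`): a fibre `μ` over `s` with
`μᵀ Δ(w) zD = μᵀ zD` for all `w` such that `s w` is enabled. -/
def IsPseudoCut {Q S : Type} [Fintype Q] [Fintype S]
    (𝒜 : BA Q S) (M : Matrix S S ℝ) (D : Set (Q × S)) (zD : ↥D → ℝ)
    (μ : ↥D → ℝ) (s : S) : Prop :=
  IsFibreVec D μ s ∧
  ∀ w : List S, Enabled M (s :: w) → μ ⬝ᵥ (DeltaW 𝒜 M D w).mulVec zD = μ ⬝ᵥ zD

/-- A `Co(d)`-pseudo-cut: a pseudo-cut over `d.2` that is nonzero at `d` and vanishes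
outside `Co(d)`. -/
def IsCoPseudoCut {Q S : Type} [Fintype Q] [Fintype S]
    (𝒜 : BA Q S) (M : Matrix S S ℝ) (D : Set (Q × S)) (zD : ↥D → ℝ)
    (d : Q × S) (hd : d ∈ D) (μ : ↥D → ℝ) : Prop :=
  IsPseudoCut 𝒜 M D zD μ d.2 ∧ μ ⟨d, hd⟩ ≠ 0 ∧
  ∀ e : ↥D, (e : Q × S) ∉ Co 𝒜 M D d → μ e = 0

/-- Auxiliary order: shortlex on reversed words. -/
def revLT {S : Type} [LinearOrder S] : List S → List S → Prop
  | [], u => u ≠ []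
  | _ :: _, [] => False
  | a :: v, b :: w =>
      (a :: v).length < (b :: w).length ∨
      ((a :: v).length = (b :: w).length ∧ (a < b ∨ (a = b ∧ revLT v w)))

/-- The order `≪` on words: shortlex, but with words read from right to left. -/
def wordLT {S : Type} [LinearOrder S] (u v : List S) : Prop :=
  revLT u.reverse v.reverse


section AuxStmt8

variable {Q S : Type}

lemma fibRun_cons' (𝒜 : BA Q S) (D : Set (Q × S)) (f : Set (Q × S)) (t : S) (v : List S) :
    fibRun 𝒜 D f (t :: v) = fibRun 𝒜 D (fibStep 𝒜 D f t) v := rfl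

lemma fibRun_append' (𝒜 : BA Q S) (D : Set (Q × S)) (f : Set (Q × S)) (v₁ v₂ : List S) :
    fibRun 𝒜 D f (v₁ ++ v₂) = fibRun 𝒜 D (fibRun 𝒜 D f v₁) v₂ := by
  induction v₁ generalizing f with
  | nil => rfl
  | cons t v ih => simp only [List.cons_append, fibRun_cons']; exact ih _

lemma fibStep_mono' (𝒜 : BA Q S) (D : Set (Q × S)) {f g : Set (Q × S)} (h : f ⊆ g) (t : S) :
    fibStep 𝒜 D f t ⊆ fibStep 𝒜 D g t := by
  rintro p ⟨hD, ht, e, he, hd⟩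
  exact ⟨hD, ht, e, h he, hd⟩

lemma fibRun_mono' (𝒜 : BA Q S) (D : Set (Q × S)) {f g : Set (Q × S)} (h : f ⊆ g) (v : List S) :
    fibRun 𝒜 D f v ⊆ fibRun 𝒜 D g v := by
  induction v generalizing f g with
  | nil => exact h
  | cons t v ih => exact ih (fibStep_mono' 𝒜 D h t)

lemma fibRun_snd' (𝒜 : BA Q S) (D : Set (Q × S)) {f : Set (Q × S)} {v : List S} {g : Q × S}
    (h : g ∈ fibRun 𝒜 D f v) :
    (v = [] ∧ g ∈ f) ∨ (v ≠ [] ∧ g ∈ D ∧ ∀ x : S, g.2 = v.getLastD x) := by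
  induction v generalizing f with
  | nil => exact Or.inl ⟨rfl, h⟩
  | cons t v ih =>
    rw [fibRun_cons'] at h
    rcases ih h with ⟨hv, hg⟩ | ⟨_, hD, hg⟩
    · subst hv
      obtain ⟨hD, ht, -⟩ := hg
      refine Or.inr ⟨List.cons_ne_nil _ _, hD, fun x => ?_⟩
      rw [List.getLastD_cons]
      exact ht
    · refine Or.inr ⟨List.cons_ne_nil _ _, hD, fun x => ?_⟩
      rw [List.getLastD_cons]
      exact hg t

lemma enabled_append' (M : Matrix S S ℝ) (s : S) (A B : List S)
    (h1 : Enabled M (s :: A)) (h2 : Enabled M (A.getLastD s :: B)) :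
    Enabled M (s :: (A ++ B)) := by
  induction A generalizing s with
  | nil => exact h2
  | cons a A ih =>
    rw [List.getLastD_cons] at h2
    obtain ⟨hsa, h1'⟩ := List.isChain_cons_cons.mp h1
    exact List.isChain_cons_cons.mpr ⟨hsa, ih a h1' h2⟩

lemma isRun_head' {𝒜 : BA Q S} {q r : Q} {w : List S} {ρ : List Q} (h : 𝒜.IsRun q w ρ r) :
    ∃ tl, ρ = q :: tl := by
  cases w with
  | nil => exact ⟨[], h.2⟩
  | cons a w => obtain ⟨q', ρ', h1, -, -⟩ := h; exact ⟨ρ', h1⟩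

lemma isRun_length' {𝒜 : BA Q S} {w : List S} :
    ∀ {q r : Q} {ρ : List Q}, 𝒜.IsRun q w ρ r → ρ.length = w.length + 1 := by
  induction w with
  | nil => intro q r ρ h; rw [h.2]; rfl
  | cons a w ih =>
    intro q r ρ h
    obtain ⟨q', ρ', h1, -, h3⟩ := h
    subst h1
    simp [ih h3]

lemma isRun_append' {𝒜 : BA Q S} {w₁ : List S} :
    ∀ {q m r : Q} {w₂ : List S} {ρ₁ ρ₂ : List Q}, 𝒜.IsRun q w₁ ρ₁ m → 𝒜.IsRun m w₂ ρ₂ r →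
      𝒜.IsRun q (w₁ ++ w₂) (ρ₁.dropLast ++ ρ₂) r := by
  induction w₁ with
  | nil =>
    intro q m r w₂ ρ₁ ρ₂ h1 h2
    obtain ⟨hqm, hρ⟩ := h1
    subst hqm; subst hρ
    exact h2
  | cons a w ih =>
    intro q m r w₂ ρ₁ ρ₂ h1 h2
    obtain ⟨q', ρ', hρ, hδ, h1'⟩ := h1
    obtain ⟨tl, htl⟩ := isRun_head' h1'
    subst hρ; subst htl
    exact ⟨q', (q' :: tl).dropLast ++ ρ₂, rfl, hδ, ih h1' h2⟩

lemma fib_isRun' (𝒜 : BA Q S) (D : Set (Q × S)) :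
    ∀ (v : List S) (f : Set (Q × S)) (g : Q × S), g ∈ fibRun 𝒜 D f v →
      ∃ p ∈ f, ∃ ρ, 𝒜.IsRun p.1 ((p.2 :: v).dropLast) ρ g.1 := by
  intro v
  induction v with
  | nil =>
    intro f g h
    exact ⟨g, h, [g.1], rfl, rfl⟩
  | cons t v ih =>
    intro f g h
    rw [fibRun_cons'] at h
    obtain ⟨p', hp', ρ', hρ'⟩ := ih _ g h
    obtain ⟨hD, ht, pe, hpe, hδ⟩ := hp'
    refine ⟨pe, hpe, pe.1 :: ρ', p'.1, ρ', rfl, hδ, ?_⟩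
    rw [← ht]
    exact hρ'

lemma scc_fib' (𝒜 : BA Q S) (M : Matrix S S ℝ) (D : Set (Q × S))
    (hD : IsSCC (Bmat 𝒜 M) D) {a b : Q × S} (ha : a ∈ D) (hb : b ∈ D) :
    ∃ y, Enabled M (a.2 :: y) ∧ b ∈ fibRun 𝒜 D {a} y := by
  obtain ⟨v₀, hv⟩ := hD
  set R : Q × S → Q × S → Prop := fun p p' => 0 < Bmat 𝒜 M p p' with hR
  have hmem : ∀ p : Q × S, p ∈ D ↔
      Relation.ReflTransGen R v₀ p ∧ Relation.ReflTransGen R p v₀ := by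
    intro p
    rw [hv]
    exact Iff.rfl
  have seg : ∀ x : Q × S, x ∈ D → ∀ z : Q × S, Relation.ReflTransGen R x z →
      Relation.ReflTransGen R z v₀ →
      ∃ y, Enabled M (x.2 :: y) ∧ z ∈ fibRun 𝒜 D {x} y ∧ y.getLastD x.2 = z.2 := by
    intro x hx z hxz
    induction hxz with
    | refl => exact fun _ => ⟨[], List.isChain_singleton _, rfl, rfl⟩
    | @tail b' c hxz' hr ih =>
      intro hcv
      obtain ⟨y', hEn', hmem', hlast'⟩ := ih (Relation.ReflTransGen.head hr hcv)
      have hpos : 0 < Bmat 𝒜 M b' c := hr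
      have hδ : c.1 ∈ 𝒜.delta b'.1 b'.2 ∧ 0 < M b'.2 c.2 := by
        by_cases hc : c.1 ∈ 𝒜.delta b'.1 b'.2
        · refine ⟨hc, ?_⟩
          simpa [Bmat, hc] using hpos
        · exfalso
          simp [Bmat, hc] at hpos
      have hcD : c ∈ D := (hmem c).mpr ⟨((hmem x).mp hx).1.trans (hxz'.tail hr), hcv⟩
      refine ⟨y' ++ [c.2], ?_, ?_, ?_⟩
      · refine enabled_append' M x.2 y' [c.2] hEn' ?_
        rw [hlast']
        exact List.isChain_pair.mpr hδ.2
      · rw [fibRun_append']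
        exact ⟨hcD, rfl, b', hmem', hδ.1⟩
      · exact List.getLastD_concat
  obtain ⟨y₁, hE1, hm1, hl1⟩ := seg a ha v₀ ((hmem a).mp ha).2 Relation.ReflTransGen.refl
  have hv₀D : v₀ ∈ D := (hmem v₀).mpr ⟨Relation.ReflTransGen.refl, Relation.ReflTransGen.refl⟩
  obtain ⟨y₂, hE2, hm2, hl2⟩ := seg v₀ hv₀D b ((hmem b).mp hb).1 ((hmem b).mp hb).2
  refine ⟨y₁ ++ y₂, ?_, ?_⟩
  · refine enabled_append' M a.2 y₁ y₂ hE1 ?_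
    rw [hl1]
    exact hE2
  · rw [fibRun_append']
    exact fibRun_mono' 𝒜 D (Set.singleton_subset_iff.mpr hm1) y₂ hm2

lemma no_diamond_disjoint' (𝒜 : BA Q S) (D : Set (Q × S)) (hND : ¬ 𝒜.HasDiamond)
    {d d' g : Q × S} {u vv : List S}
    (hdu : d ∈ fibRun 𝒜 D {d} u) (hd'u : d' ∈ fibRun 𝒜 D {d} u)
    (hq : d.1 ≠ d'.1) (hs : d.2 = d'.2)
    (hg1 : g ∈ fibRun 𝒜 D {d} vv) (hg2 : g ∈ fibRun 𝒜 D {d'} vv) : False := by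
  obtain ⟨p, hp, ρa, hρa⟩ := fib_isRun' 𝒜 D u {d} d hdu
  rw [Set.mem_singleton_iff] at hp; rw [hp] at hρa; clear hp
  obtain ⟨p, hp, ρc, hρc⟩ := fib_isRun' 𝒜 D u {d} d' hd'u
  rw [Set.mem_singleton_iff] at hp; rw [hp] at hρc; clear hp
  obtain ⟨p, hp, ρb, hρb⟩ := fib_isRun' 𝒜 D vv {d} g hg1
  rw [Set.mem_singleton_iff] at hp; rw [hp] at hρb; clear hp
  obtain ⟨p, hp, ρd, hρd⟩ := fib_isRun' 𝒜 D vv {d'} g hg2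
  rw [Set.mem_singleton_iff] at hp; rw [hp] at hρd; clear hp
  rw [← hs] at hρd
  obtain ⟨tb, htb⟩ := isRun_head' hρb
  obtain ⟨td, htd⟩ := isRun_head' hρd
  have run1 := isRun_append' hρa hρb
  have run2 := isRun_append' hρc hρd
  have hLa : ρa.dropLast.length = ((d.2 :: u).dropLast).length := by
    rw [List.length_dropLast, isRun_length' hρa]
    omega
  have hLc : ρc.dropLast.length = ((d.2 :: u).dropLast).length := by
    rw [List.length_dropLast, isRun_length' hρc]
    omega
  have hneq : ρa.dropLast ++ ρb ≠ ρc.dropLast ++ ρd := by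
    intro heq
    have h1 : (ρa.dropLast ++ ρb)[ρa.dropLast.length]? = some d.1 := by
      rw [List.getElem?_append_right (le_refl _), Nat.sub_self, htb]
      simp
    have h2 : (ρc.dropLast ++ ρd)[ρa.dropLast.length]? = some d'.1 := by
      have he : ρa.dropLast.length = ρc.dropLast.length := hLa.trans hLc.symm
      rw [he, List.getElem?_append_right (le_refl _), Nat.sub_self, htd]
      simp
    rw [heq, h2] at h1
    exact hq (Option.some.inj h1).symm
  exact hND ⟨d.1, g.1, _, _, _, hneq, run1, run2⟩

end AuxStmt8

/-- if `d⇒w` is a cut containing `d`, then `d'⇒w = ∅` for every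
`d' ∈ Co(d)` other than `d`. -/
theorem stmt_8 {Q S : Type} [Fintype Q] [Fintype S]
    (𝒜 : BA Q S) (M : Matrix S S ℝ) (hM : IsMarkov M)
    (hU : 𝒜.Unambiguous) (hND : ¬ 𝒜.HasDiamond) (hAR : 𝒜.AllReachable)
    (D : Set (Q × S)) (hD : IsSCC (Bmat 𝒜 M) D)
    (hrec : RecurrentSCC 𝒜 M D) (hacc : AcceptingSCC 𝒜 D)
    (d : Q × S) (hd : d ∈ D)
    (w : List S) (hwdef : Enabled M (d.2 :: w))
    (hdin : d ∈ fibRun 𝒜 D {d} w)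
    (hcut : IsCut 𝒜 M D (fibRun 𝒜 D {d} w)) :
    ∀ d' ∈ Co 𝒜 M D d, d' ≠ d → fibRun 𝒜 D {d'} w = ∅ := by
  intro d' hd' hneq
  by_contra hne
  obtain ⟨e, he⟩ := Set.nonempty_iff_ne_empty.mpr hne
  obtain ⟨hd'D, u, hEu, hdu, hd'u⟩ := hd'
  have hu_ne : u ≠ [] := by
    intro h
    subst h
    exact hneq (by simpa [fibRun] using hd'u)
  have hd'2 : d'.2 = d.2 := by
    rcases fibRun_snd' 𝒜 D hd'u with ⟨h1, -⟩ | ⟨-, -, h2⟩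
    · exact absurd h1 hu_ne
    rcases fibRun_snd' 𝒜 D hdu with ⟨h1, -⟩ | ⟨-, -, h3⟩
    · exact absurd h1 hu_ne
    rw [h2 d.2, ← h3 d.2]
  have hd'1 : d.1 ≠ d'.1 := by
    intro h
    exact hneq (Prod.ext_iff.mpr ⟨h.symm, hd'2⟩)
  have he2 : e.2 = d.2 := by
    rcases fibRun_snd' 𝒜 D he with ⟨h1, h2⟩ | ⟨-, -, h2⟩
    · rw [Set.mem_singleton_iff] at h2
      rw [h2]
      exact hd'2
    rcases fibRun_snd' 𝒜 D hdin with ⟨h3, -⟩ | ⟨-, -, h4⟩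
    · subst h3
      simp only [List.getLastD] at h2
      exact h2 d.2
    rw [h2 d.2, ← h4 d.2]
  have heD : e ∈ D := by
    rcases fibRun_snd' 𝒜 D he with ⟨h1, h2⟩ | ⟨-, hD2, -⟩
    · rw [Set.mem_singleton_iff] at h2
      rw [h2]
      exact hd'D
    · exact hD2
  obtain ⟨y, hEy, hdy⟩ := scc_fib' 𝒜 M D hD heD hd
  rw [he2] at hEy
  have hlastaux : ∀ {v : List S} {f : Set (Q × S)}, d ∈ fibRun 𝒜 D f v →
      v.getLastD d.2 = d.2 := by
    intro v f h
    rcases fibRun_snd' 𝒜 D h with ⟨h1, -⟩ | ⟨-, -, h2⟩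
    · subst h1; rfl
    · exact (h2 d.2).symm
  have hlu : u.getLastD d.2 = d.2 := hlastaux hdu
  have hlw : w.getLastD d.2 = d.2 := hlastaux hdin
  have hly : y.getLastD d.2 = d.2 := hlastaux hdy
  obtain ⟨d₀, hd₀, v, hEv, hceq, hprop⟩ := hcut
  have hdc : d ∈ fibRun 𝒜 D {d₀} v := hceq ▸ hdin
  have hvlast : v.getLastD d₀.2 = d.2 := by
    rcases fibRun_snd' 𝒜 D hdc with ⟨h1, h2⟩ | ⟨-, -, h2⟩
    · subst h1
      rw [Set.mem_singleton_iff] at h2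
      rw [h2]
      rfl
    · exact (h2 d₀.2).symm
  have hcutprop : ∀ x : List S, Enabled M (d.2 :: x) →
      fibRun 𝒜 D (fibRun 𝒜 D {d} w) x ≠ ∅ := by
    intro x hx
    exact hprop x (by rwa [hvlast])
  have key : ∀ k : ℕ, ∃ WW : List S, Enabled M (d.2 :: WW) ∧
      k + 1 ≤ (fibRun 𝒜 D {d} WW).ncard := by
    intro k
    induction k with
    | zero =>
      refine ⟨[], List.isChain_singleton _, ?_⟩
      rw [show fibRun 𝒜 D {d} [] = {d} from rfl, Set.ncard_singleton]
    | succ k ih =>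
      obtain ⟨WW, hEW, hcard⟩ := ih
      have hEyW : Enabled M (d.2 :: (y ++ WW)) := by
        refine enabled_append' M d.2 y WW hEy ?_
        rw [hly]
        exact hEW
      refine ⟨u ++ (w ++ (y ++ WW)), ?_, ?_⟩
      · refine enabled_append' M d.2 u _ hEu ?_
        rw [hlu]
        refine enabled_append' M d.2 w _ hwdef ?_
        rw [hlw]
        exact hEyW
      · have hAne : (fibRun 𝒜 D {d} (w ++ (y ++ WW))).Nonempty := by
          rw [fibRun_append']
          exact Set.nonempty_iff_ne_empty.mpr (hcutprop (y ++ WW) hEyW)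
        have hAsub : fibRun 𝒜 D {d} (w ++ (y ++ WW)) ⊆
            fibRun 𝒜 D {d} (u ++ (w ++ (y ++ WW))) := by
          rw [fibRun_append' 𝒜 D {d} u (w ++ (y ++ WW))]
          exact fibRun_mono' 𝒜 D (Set.singleton_subset_iff.mpr hdu) _
        have hBsub : fibRun 𝒜 D {e} (y ++ WW) ⊆
            fibRun 𝒜 D {d} (u ++ (w ++ (y ++ WW))) := by
          calc fibRun 𝒜 D {e} (y ++ WW)
              ⊆ fibRun 𝒜 D (fibRun 𝒜 D {d'} w) (y ++ WW) :=
                fibRun_mono' 𝒜 D (Set.singleton_subset_iff.mpr he) _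
            _ = fibRun 𝒜 D {d'} (w ++ (y ++ WW)) := (fibRun_append' 𝒜 D {d'} w _).symm
            _ ⊆ fibRun 𝒜 D (fibRun 𝒜 D {d} u) (w ++ (y ++ WW)) :=
                fibRun_mono' 𝒜 D (Set.singleton_subset_iff.mpr hd'u) _
            _ = fibRun 𝒜 D {d} (u ++ (w ++ (y ++ WW))) := (fibRun_append' 𝒜 D {d} u _).symm
        have hdisj : Disjoint (fibRun 𝒜 D {d} (w ++ (y ++ WW)))
            (fibRun 𝒜 D {e} (y ++ WW)) := by
          rw [Set.disjoint_left]
          intro g hg1 hg2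
          have hg2' : g ∈ fibRun 𝒜 D {d'} (w ++ (y ++ WW)) := by
            rw [fibRun_append']
            exact fibRun_mono' 𝒜 D (Set.singleton_subset_iff.mpr he) _ hg2
          exact no_diamond_disjoint' 𝒜 D hND hdu hd'u hd'1 hd'2.symm hg1 hg2'
        have hBw : fibRun 𝒜 D {d} WW ⊆ fibRun 𝒜 D {e} (y ++ WW) := by
          rw [fibRun_append']
          exact fibRun_mono' 𝒜 D (Set.singleton_subset_iff.mpr hdy) WW
        have h1 : 1 ≤ (fibRun 𝒜 D {d} (w ++ (y ++ WW))).ncard :=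
          (Set.ncard_pos (Set.toFinite _)).mpr hAne
        have h2 : k + 1 ≤ (fibRun 𝒜 D {e} (y ++ WW)).ncard :=
          le_trans hcard (Set.ncard_le_ncard hBw (Set.toFinite _))
        calc k + 1 + 1
            ≤ (fibRun 𝒜 D {d} (w ++ (y ++ WW))).ncard
              + (fibRun 𝒜 D {e} (y ++ WW)).ncard := by omega
          _ = (fibRun 𝒜 D {d} (w ++ (y ++ WW)) ∪ fibRun 𝒜 D {e} (y ++ WW)).ncard :=
              (Set.ncard_union_eq hdisj (Set.toFinite _) (Set.toFinite _)).symm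
          _ ≤ (fibRun 𝒜 D {d} (u ++ (w ++ (y ++ WW)))).ncard :=
              Set.ncard_le_ncard (Set.union_subset hAsub hBsub) (Set.toFinite _)
  obtain ⟨WW, -, hcard⟩ := key (Fintype.card (Q × S))
  have hub : (fibRun 𝒜 D {d} WW).ncard ≤ Fintype.card (Q × S) := by
    have h := Set.ncard_le_ncard (Set.subset_univ (fibRun 𝒜 D {d} WW)) Set.finite_univ
    rwa [Set.ncard_univ, Nat.card_eq_fintype_card] at h
  omega
end

section
/- Let D be an accepting recurrent SCC of B, let d = ⟨q,s⟩ ∈ D, let y ∈ ℝ^D have strictly positive entries and satisfy B_{D,D} y = y, and let R(s) be a basis of V(s) such that every r ∈ R(s) equals Δ′(s)Δ(w_r)y for some w_r ∈ S* with s w_r enabled. Let w ∈ S* be such that s w is enabled and let (γ_r)_{r∈R(s)} be the (unique) real coefficients with Δ′(s)Δ(w)y = Σ_{r∈R(s)} γ_r r. Then Σ_{r∈R(s)} γ_r = 1. -/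
open Matrix MeasureTheory

attribute [local instance] Classical.propDecidable

/-! ### Auxiliary development for Statement 10 -/

namespace Stmt10Aux

variable {Q S : Type} [Fintype Q] [Fintype S]
variable (𝒜 : BA Q S) (M : Matrix S S ℝ) (D : Set (Q × S))

/-- The transition predicate underlying `Delta`. -/
def Step (t : S) (a b : ↥D) : Prop :=
  (b : Q × S).2 = t ∧ 0 < M (a : Q × S).2 t ∧
    (b : Q × S).1 ∈ 𝒜.delta (a : Q × S).1 (a : Q × S).2

set_option linter.unusedSectionVars false

lemma delta_of_step {t : S} {a b : ↥D} (h : Step 𝒜 M D t a b) :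
    Delta 𝒜 M D t a b = 1 := by
  obtain ⟨h1, h2, h3⟩ := h
  unfold Delta
  rw [Matrix.of_apply, if_pos ⟨h1, h2, h3⟩]

lemma delta_of_not_step {t : S} {a b : ↥D} (h : ¬ Step 𝒜 M D t a b) :
    Delta 𝒜 M D t a b = 0 := by
  unfold Delta
  rw [Matrix.of_apply, if_neg]
  intro hc
  exact h ⟨hc.1, hc.2.1, hc.2.2⟩

/-- `D`-runs over a word, as a finset of lists. -/
noncomputable def Runs : List S → ↥D → ↥D → Finset (List ↥D)
  | [], a, b => if a = b then {[a]} else ∅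
  | t :: v, a, b =>
      Finset.univ.biUnion fun c =>
        if Step 𝒜 M D t a c then (Runs v c b).image (List.cons a) else ∅

lemma runs_nil (a b : ↥D) : Runs 𝒜 M D [] a b = if a = b then {[a]} else ∅ := rfl

lemma runs_cons (t : S) (v : List S) (a b : ↥D) :
    Runs 𝒜 M D (t :: v) a b =
      Finset.univ.biUnion fun c =>
        if Step 𝒜 M D t a c then (Runs 𝒜 M D v c b).image (List.cons a) else ∅ := rfl

lemma deltaW_nil : DeltaW 𝒜 M D [] = 1 := rfl

lemma deltaW_cons (t : S) (v : List S) :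
    DeltaW 𝒜 M D (t :: v) = Delta 𝒜 M D t * DeltaW 𝒜 M D v := rfl

lemma runs_shape {v : List S} {a b : ↥D} {ℓ : List ↥D} (hℓ : ℓ ∈ Runs 𝒜 M D v a b) :
    ∃ ℓ', ℓ = a :: ℓ' := by
  cases v with
  | nil =>
      rw [runs_nil] at hℓ
      split at hℓ
      · simp only [Finset.mem_singleton] at hℓ; exact ⟨[], hℓ⟩
      · simp at hℓ
  | cons t v =>
      rw [runs_cons] at hℓ
      simp only [Finset.mem_biUnion] at hℓ
      obtain ⟨c, -, hc⟩ := hℓ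
      split at hc
      · obtain ⟨ℓ', -, rfl⟩ := Finset.mem_image.mp hc
        exact ⟨ℓ', rfl⟩
      · simp at hc

lemma deltaW_eq_card : ∀ (v : List S) (a b : ↥D),
    DeltaW 𝒜 M D v a b = ((Runs 𝒜 M D v a b).card : ℝ) := by
  intro v
  induction v with
  | nil =>
      intro a b
      by_cases h : a = b <;>
        simp [deltaW_nil, runs_nil, Matrix.one_apply, h]
  | cons t v ih =>
      intro a b
      have hdisj : ∀ c₁ ∈ (Finset.univ : Finset ↥D), ∀ c₂ ∈ (Finset.univ : Finset ↥D),
          c₁ ≠ c₂ → Disjoint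
            (if Step 𝒜 M D t a c₁ then (Runs 𝒜 M D v c₁ b).image (List.cons a) else ∅)
            (if Step 𝒜 M D t a c₂ then (Runs 𝒜 M D v c₂ b).image (List.cons a) else ∅) := by
        intro c₁ _ c₂ _ hne
        refine Finset.disjoint_left.mpr fun ℓ h₁ h₂ => hne ?_
        split at h₁; swap
        · simp at h₁
        split at h₂; swap
        · simp at h₂
        obtain ⟨ℓ₁, hℓ₁, rfl⟩ := Finset.mem_image.mp h₁
        obtain ⟨ℓ₂, hℓ₂, heq⟩ := Finset.mem_image.mp h₂
        obtain ⟨ℓ₁', rfl⟩ := runs_shape 𝒜 M D hℓ₁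
        obtain ⟨ℓ₂', rfl⟩ := runs_shape 𝒜 M D hℓ₂
        injection heq with h1 h2
        injection h2 with h3 h4
        exact h3.symm
      have hcard : ((Runs 𝒜 M D (t :: v) a b).card : ℝ)
          = ∑ c, (if Step 𝒜 M D t a c then ((Runs 𝒜 M D v c b).card : ℝ) else 0) := by
        rw [runs_cons, Finset.card_biUnion hdisj, Nat.cast_sum]
        refine Finset.sum_congr rfl fun c _ => ?_
        split
        · rw [Finset.card_image_of_injective _ (List.cons_injective)]
        · simp
      rw [deltaW_cons, Matrix.mul_apply, hcard]
      refine Finset.sum_congr rfl fun c _ => ?_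
      by_cases h : Step 𝒜 M D t a c
      · rw [delta_of_step 𝒜 M D h, ih, if_pos h, one_mul]
      · rw [delta_of_not_step 𝒜 M D h, if_neg h, zero_mul]

/-- The word read by a run starting in fibre `u` over `v`. -/
def Wrd : S → List S → List S
  | _, [] => []
  | u, t :: v => u :: Wrd t v

lemma runs_map_snd : ∀ (v : List S) (a b : ↥D) (ℓ : List ↥D),
    ℓ ∈ Runs 𝒜 M D v a b → ℓ.map (fun e : ↥D => (e : Q × S).2) = (a : Q × S).2 :: v := by
  intro v
  induction v with
  | nil =>
      intro a b ℓ hℓ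
      rw [runs_nil] at hℓ
      split at hℓ
      · simp only [Finset.mem_singleton] at hℓ; simp [hℓ]
      · simp at hℓ
  | cons t v ih =>
      intro a b ℓ hℓ
      rw [runs_cons] at hℓ
      simp only [Finset.mem_biUnion] at hℓ
      obtain ⟨c, -, hc⟩ := hℓ
      split at hc
      · rename_i hstep
        obtain ⟨ℓ', hℓ', rfl⟩ := Finset.mem_image.mp hc
        have := ih c b ℓ' hℓ'
        simp only [List.map_cons, this, hstep.1]
      · simp at hc

lemma runs_isRun : ∀ (v : List S) (a b : ↥D) (ℓ : List ↥D),
    ℓ ∈ Runs 𝒜 M D v a b →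
      𝒜.IsRun (a : Q × S).1 (Wrd (a : Q × S).2 v) (ℓ.map fun e : ↥D => (e : Q × S).1)
        (b : Q × S).1 := by
  intro v
  induction v with
  | nil =>
      intro a b ℓ hℓ
      rw [runs_nil] at hℓ
      split at hℓ
      · rename_i hab
        simp only [Finset.mem_singleton] at hℓ
        subst hab hℓ
        exact ⟨rfl, by simp [Wrd]⟩
      · simp at hℓ
  | cons t v ih =>
      intro a b ℓ hℓ
      rw [runs_cons] at hℓ
      simp only [Finset.mem_biUnion] at hℓ
      obtain ⟨c, -, hc⟩ := hℓ
      split at hc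
      · rename_i hstep
        obtain ⟨ℓ', hℓ', rfl⟩ := Finset.mem_image.mp hc
        have hr := ih c b ℓ' hℓ'
        rw [hstep.1] at hr
        exact ⟨(c : Q × S).1, ℓ'.map fun e : ↥D => (e : Q × S).1, by simp, hstep.2.2, hr⟩
      · simp at hc

lemma map_proj_inj : ∀ (l₁ l₂ : List ↥D),
    l₁.map (fun e : ↥D => (e : Q × S).1) = l₂.map (fun e : ↥D => (e : Q × S).1) →
    l₁.map (fun e : ↥D => (e : Q × S).2) = l₂.map (fun e : ↥D => (e : Q × S).2) →
    l₁ = l₂ := by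
  intro l₁
  induction l₁ with
  | nil => intro l₂ h1 _; cases l₂ <;> simp_all
  | cons a l ih =>
      intro l₂ h1 h2
      cases l₂ with
      | nil => simp at h1
      | cons b l' =>
          simp only [List.map_cons, List.cons.injEq] at h1 h2
          have hab : a = b := Subtype.ext (Prod.ext h1.1 h2.1)
          rw [hab, ih l' h1.2 h2.2]

lemma runs_card_le_one (hND : ¬ 𝒜.HasDiamond) (v : List S) (a b : ↥D) :
    (Runs 𝒜 M D v a b).card ≤ 1 := by
  by_contra h
  push_neg at h
  obtain ⟨ℓ₁, h₁, ℓ₂, h₂, hne⟩ := Finset.one_lt_card.mp h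
  have hmapne : ℓ₁.map (fun e : ↥D => (e : Q × S).1) ≠ ℓ₂.map (fun e : ↥D => (e : Q × S).1) := by
    intro hmap
    exact hne (map_proj_inj D ℓ₁ ℓ₂ hmap
      ((runs_map_snd 𝒜 M D v a b ℓ₁ h₁).trans (runs_map_snd 𝒜 M D v a b ℓ₂ h₂).symm))
  exact hND ⟨(a : Q × S).1, (b : Q × S).1, Wrd (a : Q × S).2 v, _, _, hmapne,
    runs_isRun 𝒜 M D v a b ℓ₁ h₁, runs_isRun 𝒜 M D v a b ℓ₂ h₂⟩

lemma deltaW_nonneg (v : List S) (a b : ↥D) : 0 ≤ DeltaW 𝒜 M D v a b := by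
  rw [deltaW_eq_card]; positivity

lemma deltaW_le_one (hND : ¬ 𝒜.HasDiamond) (v : List S) (a b : ↥D) :
    DeltaW 𝒜 M D v a b ≤ 1 := by
  rw [deltaW_eq_card]
  exact_mod_cast runs_card_le_one 𝒜 M D hND v a b

lemma deltaW_append : ∀ (v w : List S),
    DeltaW 𝒜 M D (v ++ w) = DeltaW 𝒜 M D v * DeltaW 𝒜 M D w := by
  intro v
  induction v with
  | nil => intro w; rw [deltaW_nil, one_mul]; rfl
  | cons t v ih =>
      intro w
      rw [List.cons_append, deltaW_cons, deltaW_cons, ih, Matrix.mul_assoc]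

/-- Row `a` of `Δ(v)`. -/
noncomputable def rho (a : ↥D) (v : List S) : ↥D → ℝ := fun b => DeltaW 𝒜 M D v a b

/-- `h(v) = ρ_v ⬝ y`. -/
noncomputable def hh (y : ↥D → ℝ) (a : ↥D) (v : List S) : ℝ :=
  dotProduct (rho 𝒜 M D a v) y

/-- Last letter of `s :: v`. -/
def uof (s : S) (v : List S) : S := v.getLastD s

lemma uof_nil (s : S) : uof s ([] : List S) = s := rfl

lemma uof_concat (s t : S) (v : List S) : uof s (v ++ [t]) = t := by
  unfold uof; exact List.getLastD_concat

lemma uof_cons (s t : S) (v : List S) : uof s (t :: v) = uof t v := by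
  unfold uof; exact List.getLastD_cons

lemma uof_append (s : S) (v w : List S) : uof s (v ++ w) = uof (uof s v) w := by
  induction v generalizing s with
  | nil => rfl
  | cons t v ih => rw [List.cons_append, uof_cons, uof_cons, ih]

lemma getLast?_cons (s : S) (v : List S) : (s :: v).getLast? = some (uof s v) := by
  induction v generalizing s with
  | nil => rfl
  | cons t v ih => rw [List.getLast?_cons_cons, ih, uof_cons]

lemma rho_nil (a : ↥D) : rho 𝒜 M D a [] = fun b => if a = b then 1 else 0 := by
  funext b
  unfold rho
  rw [deltaW_nil, Matrix.one_apply]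

lemma rho_append (a : ↥D) (v w : List S) :
    rho 𝒜 M D a (v ++ w) = Matrix.vecMul (rho 𝒜 M D a v) (DeltaW 𝒜 M D w) := by
  funext b
  unfold rho
  rw [deltaW_append, Matrix.mul_apply]
  simp [Matrix.vecMul, dotProduct]

lemma rho_nonneg (a : ↥D) (v : List S) (b : ↥D) : 0 ≤ rho 𝒜 M D a v b :=
  deltaW_nonneg 𝒜 M D v a b

lemma deltaW_snd : ∀ (v : List S) (a b : ↥D), DeltaW 𝒜 M D v a b ≠ 0 →
    (b : Q × S).2 = uof (a : Q × S).2 v := by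
  intro v
  induction v with
  | nil =>
      intro a b h
      rw [deltaW_nil, Matrix.one_apply] at h
      have : a = b := by by_contra hne; rw [if_neg hne] at h; exact h rfl
      rw [← this, uof_nil]
  | cons t v ih =>
      intro a b h
      rw [deltaW_cons, Matrix.mul_apply] at h
      obtain ⟨c, -, hc⟩ := Finset.exists_ne_zero_of_sum_ne_zero h
      have h1 : Delta 𝒜 M D t a c ≠ 0 := fun h0 => hc (by rw [h0, zero_mul])
      have h2 : DeltaW 𝒜 M D v c b ≠ 0 := fun h0 => hc (by rw [h0, mul_zero])
      have hstep : Step 𝒜 M D t a c := by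
        by_contra hns
        exact h1 (delta_of_not_step 𝒜 M D hns)
      rw [uof_cons, ← hstep.1]
      exact ih c b h2

lemma rho_snd {a : ↥D} {v : List S} {b : ↥D} (h : rho 𝒜 M D a v b ≠ 0) :
    (b : Q × S).2 = uof (a : Q × S).2 v :=
  deltaW_snd 𝒜 M D v a b h

/-- Enabledness lemmas. -/
lemma enabled_concat {s t : S} {v : List S} (h : Enabled M (s :: v))
    (hpos : 0 < M (uof s v) t) : Enabled M (s :: (v ++ [t])) := by
  unfold Enabled List.Chain' at *
  rw [show s :: (v ++ [t]) = (s :: v) ++ [t] from rfl, List.isChain_append]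
  refine ⟨h, List.isChain_singleton t, ?_⟩
  intro x hx u hu
  rw [getLast?_cons] at hx
  simp only [Option.mem_def, Option.some.injEq] at hx
  simp only [List.head?_cons, Option.mem_def, Option.some.injEq] at hu
  rw [← hx, ← hu]
  exact hpos

lemma enabled_prefix {s : S} {v w : List S} (h : Enabled M (s :: (v ++ w))) :
    Enabled M (s :: v) := by
  unfold Enabled at *
  rw [show s :: (v ++ w) = (s :: v) ++ w from rfl] at h
  exact h.left_of_append

lemma enabled_glue {s : S} {v w : List S} (h1 : Enabled M (s :: v))
    (h2 : Enabled M (uof s v :: w)) : Enabled M (s :: (v ++ w)) := by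
  unfold Enabled List.Chain' at *
  rw [show s :: (v ++ w) = (s :: v) ++ w from rfl, List.isChain_append]
  refine ⟨h1, h2.tail, ?_⟩
  intro x hx u hu
  rw [getLast?_cons] at hx
  simp only [Option.mem_def, Option.some.injEq] at hx
  subst hx
  exact (List.isChain_cons.mp h2).1 u hu

lemma enabled_last {s t : S} {v : List S} (h : Enabled M (s :: (v ++ [t]))) :
    0 < M (uof s v) t := by
  unfold Enabled List.Chain' at *
  rw [show s :: (v ++ [t]) = (s :: v) ++ [t] from rfl, List.isChain_append] at h
  exact h.2.2 _ (by rw [getLast?_cons]; rfl) t rfl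

lemma enabled_suffix {s : S} {v w : List S} (h : Enabled M (s :: (v ++ w))) :
    Enabled M (uof s v :: w) := by
  unfold Enabled List.Chain' at *
  rw [show s :: (v ++ w) = (s :: v) ++ w from rfl, List.isChain_append] at h
  rw [List.isChain_cons]
  refine ⟨?_, h.2.1⟩
  intro u hu
  exact h.2.2 _ (by rw [getLast?_cons]; rfl) u hu

lemma subMat_apply (e b : ↥D) :
    subMat (Bmat 𝒜 M) D e b =
      if (b : Q × S).1 ∈ 𝒜.delta (e : Q × S).1 (e : Q × S).2
      then M (e : Q × S).2 (b : Q × S).2 else 0 := by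
  unfold subMat Bmat
  rw [Matrix.submatrix_apply, Matrix.of_apply]

lemma row_collapse (hM : IsMarkov M) {u : S} {e : ↥D} (heu : (e : Q × S).2 = u)
    (b : ↥D) :
    subMat (Bmat 𝒜 M) D e b = ∑ t, M u t * Delta 𝒜 M D t e b := by
  rw [Finset.sum_eq_single_of_mem ((b : Q × S).2) (Finset.mem_univ _)]
  · by_cases hedge : (b : Q × S).1 ∈ 𝒜.delta (e : Q × S).1 (e : Q × S).2
    · by_cases hpos : 0 < M (e : Q × S).2 (b : Q × S).2
      · rw [delta_of_step 𝒜 M D ⟨rfl, hpos, hedge⟩, mul_one, subMat_apply,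
          if_pos hedge, heu]
      · have hz : M (e : Q × S).2 (b : Q × S).2 = 0 :=
          le_antisymm (not_lt.mp hpos) (hM.1 _ _)
        rw [delta_of_not_step 𝒜 M D (fun hs => hpos hs.2.1), mul_zero, subMat_apply,
          if_pos hedge, hz]
    · rw [delta_of_not_step 𝒜 M D (fun hs => hedge hs.2.2), mul_zero, subMat_apply,
        if_neg hedge]
  · intro t _ hne
    rw [delta_of_not_step 𝒜 M D (fun hs => hne (hs.1.symm)), mul_zero]

lemma rho_concat (a : ↥D) (v : List S) (t : S) (b : ↥D) :
    rho 𝒜 M D a (v ++ [t]) b = ∑ e, rho 𝒜 M D a v e * Delta 𝒜 M D t e b := by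
  rw [rho_append]
  simp only [Matrix.vecMul, dotProduct, deltaW_cons, deltaW_nil, Matrix.mul_one]

lemma mart (hM : IsMarkov M) (y : ↥D → ℝ)
    (heig : (subMat (Bmat 𝒜 M) D).mulVec y = y) (a : ↥D) (v : List S) :
    hh 𝒜 M D y a v = ∑ t, M (uof (a : Q × S).2 v) t * hh 𝒜 M D y a (v ++ [t]) := by
  set u := uof (a : Q × S).2 v with hu
  have step1 : hh 𝒜 M D y a v
      = ∑ e, rho 𝒜 M D a v e * ((subMat (Bmat 𝒜 M) D).mulVec y e) := by
    unfold hh dotProduct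
    rw [heig]
  have hmv : ∀ e : ↥D, (subMat (Bmat 𝒜 M) D).mulVec y e
      = ∑ b, subMat (Bmat 𝒜 M) D e b * y b := fun e => rfl
  have pointwise : ∀ e : ↥D, rho 𝒜 M D a v e * ((subMat (Bmat 𝒜 M) D).mulVec y e)
      = ∑ t, M u t * (∑ b, rho 𝒜 M D a v e * Delta 𝒜 M D t e b * y b) := by
    intro e
    by_cases hz : rho 𝒜 M D a v e = 0
    · simp [hz]
    · have heu : (e : Q × S).2 = u := rho_snd 𝒜 M D hz
      rw [hmv]
      have : ∀ b : ↥D, subMat (Bmat 𝒜 M) D e b * y b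
          = ∑ t, M u t * (Delta 𝒜 M D t e b * y b) := by
        intro b
        rw [row_collapse 𝒜 M D hM heu, Finset.sum_mul]
        refine Finset.sum_congr rfl fun t _ => ?_
        ring
      rw [Finset.sum_congr rfl fun b _ => this b, Finset.sum_comm, Finset.mul_sum]
      refine Finset.sum_congr rfl fun t _ => ?_
      rw [Finset.mul_sum, Finset.mul_sum]
      refine Finset.sum_congr rfl fun b _ => ?_
      ring
  have step2 : hh 𝒜 M D y a v
      = ∑ t, M u t * (∑ e, ∑ b, rho 𝒜 M D a v e * Delta 𝒜 M D t e b * y b) := by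
    rw [step1, Finset.sum_congr rfl fun e _ => pointwise e, Finset.sum_comm]
    refine Finset.sum_congr rfl fun t _ => ?_
    rw [Finset.mul_sum]
  rw [step2]
  refine Finset.sum_congr rfl fun t _ => ?_
  congr 1
  unfold hh dotProduct
  rw [Finset.sum_comm]
  refine Finset.sum_congr rfl fun b _ => ?_
  rw [rho_concat, Finset.sum_mul]

/-- Survival indicator process: `G k ρ u` bounds the probability that the fibre
described by `ρ` (sitting over letter `u`) is still alive after `k` more steps. -/
noncomputable def G : ℕ → (↥D → ℝ) → S → ℝ
  | 0, ρ, _ => if ρ = 0 then 0 else 1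
  | k + 1, ρ, u => ∑ t, M u t * G k (Matrix.vecMul ρ (Delta 𝒜 M D t)) t

lemma G_zero_eq (ρ : ↥D → ℝ) (u : S) : G 𝒜 M D 0 ρ u = if ρ = 0 then 0 else 1 := rfl

lemma G_succ_eq (k : ℕ) (ρ : ↥D → ℝ) (u : S) :
    G 𝒜 M D (k + 1) ρ u = ∑ t, M u t * G 𝒜 M D k (Matrix.vecMul ρ (Delta 𝒜 M D t)) t := rfl

lemma G_nonneg (hM : IsMarkov M) : ∀ (k : ℕ) (ρ : ↥D → ℝ) (u : S), 0 ≤ G 𝒜 M D k ρ u := by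
  intro k
  induction k with
  | zero =>
      intro ρ u
      rw [G_zero_eq]
      split <;> norm_num
  | succ k ih =>
      intro ρ u
      rw [G_succ_eq]
      exact Finset.sum_nonneg fun t _ => mul_nonneg (hM.1 u t) (ih _ _)

lemma G_le_one (hM : IsMarkov M) : ∀ (k : ℕ) (ρ : ↥D → ℝ) (u : S), G 𝒜 M D k ρ u ≤ 1 := by
  intro k
  induction k with
  | zero =>
      intro ρ u
      rw [G_zero_eq]
      split <;> norm_num
  | succ k ih =>
      intro ρ u
      rw [G_succ_eq]
      calc ∑ t, M u t * G 𝒜 M D k (Matrix.vecMul ρ (Delta 𝒜 M D t)) t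
          ≤ ∑ t, M u t * 1 :=
            Finset.sum_le_sum fun t _ => mul_le_mul_of_nonneg_left (ih _ _) (hM.1 u t)
        _ = 1 := by simp [hM.2 u]

lemma G_of_zero (hM : IsMarkov M) : ∀ (k : ℕ) (u : S), G 𝒜 M D k 0 u = 0 := by
  intro k
  induction k with
  | zero => intro u; rw [G_zero_eq, if_pos rfl]
  | succ k ih =>
      intro u
      rw [G_succ_eq]
      refine Finset.sum_eq_zero fun t _ => ?_
      rw [Matrix.zero_vecMul, ih, mul_zero]

lemma G_succ_le (hM : IsMarkov M) : ∀ (k : ℕ) (ρ : ↥D → ℝ) (u : S),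
    G 𝒜 M D (k + 1) ρ u ≤ G 𝒜 M D k ρ u := by
  intro k
  induction k with
  | zero =>
      intro ρ u
      rw [G_succ_eq, G_zero_eq]
      split
      · rename_i h
        subst h
        refine le_of_eq (Finset.sum_eq_zero fun t _ => ?_)
        rw [Matrix.zero_vecMul, G_of_zero 𝒜 M D hM, mul_zero]
      · calc ∑ t, M u t * G 𝒜 M D 0 (Matrix.vecMul ρ (Delta 𝒜 M D t)) t
            ≤ ∑ t, M u t * 1 :=
              Finset.sum_le_sum fun t _ =>
                mul_le_mul_of_nonneg_left (G_le_one 𝒜 M D hM _ _ _) (hM.1 u t)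
          _ = 1 := by simp [hM.2 u]
  | succ k ih =>
      intro ρ u
      rw [G_succ_eq, G_succ_eq]
      exact Finset.sum_le_sum fun t _ =>
        mul_le_mul_of_nonneg_left (ih _ _) (hM.1 u t)

lemma G_anti (hM : IsMarkov M) {k m : ℕ} (hkm : k ≤ m) (ρ : ↥D → ℝ) (u : S) :
    G 𝒜 M D m ρ u ≤ G 𝒜 M D k ρ u := by
  induction m with
  | zero => rw [Nat.le_zero.mp hkm]
  | succ m ih =>
      rcases Nat.lt_or_ge k (m + 1) with h | h
      · exact le_trans (G_succ_le 𝒜 M D hM m ρ u) (ih (Nat.lt_succ_iff.mp h))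
      · rw [le_antisymm hkm h]

/-- The path weight of a word. -/
noncomputable def Pw : S → List S → ℝ
  | _, [] => 1
  | u, t :: w => M u t * Pw t w

lemma Pw_nonneg (hM : IsMarkov M) : ∀ (w : List S) (u : S), 0 ≤ Pw M u w := by
  intro w
  induction w with
  | nil => intro u; norm_num [Pw]
  | cons t w ih => intro u; exact mul_nonneg (hM.1 u t) (ih t)

/-- If `ρ ≥ 0` is killed by the word `w`, the survival probability after `|w|`
steps is at most `1 - Pw u w`. -/
lemma G_killed (hM : IsMarkov M) : ∀ (w : List S) (ρ : ↥D → ℝ) (u : S),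
    (∀ e, 0 ≤ ρ e) → Matrix.vecMul ρ (DeltaW 𝒜 M D w) = 0 →
    G 𝒜 M D w.length ρ u ≤ 1 - Pw M u w := by
  intro w
  induction w with
  | nil =>
      intro ρ u hnn hkill
      rw [deltaW_nil, Matrix.vecMul_one] at hkill
      rw [List.length_nil, G_zero_eq, if_pos hkill, Pw]
      norm_num
  | cons t w ih =>
      intro ρ u hnn hkill
      rw [List.length_cons, G_succ_eq]
      have hkill' : Matrix.vecMul (Matrix.vecMul ρ (Delta 𝒜 M D t)) (DeltaW 𝒜 M D w) = 0 := by
        rw [Matrix.vecMul_vecMul, ← deltaW_cons]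
        exact hkill
      have hterm : M u t * G 𝒜 M D w.length (Matrix.vecMul ρ (Delta 𝒜 M D t)) t
          ≤ M u t * (1 - Pw M t w) := by
        refine mul_le_mul_of_nonneg_left ?_ (hM.1 u t)
        refine ih _ t ?_ hkill'
        intro b
        exact Finset.sum_nonneg fun e _ => mul_nonneg (hnn e) (deltaW_nonneg 𝒜 M D [t] e b |>.trans_eq (by rw [deltaW_cons, deltaW_nil, Matrix.mul_one]))
      calc ∑ t', M u t' * G 𝒜 M D w.length (Matrix.vecMul ρ (Delta 𝒜 M D t')) t'
          = M u t * G 𝒜 M D w.length (Matrix.vecMul ρ (Delta 𝒜 M D t)) t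
            + ∑ t' ∈ Finset.univ.erase t,
                M u t' * G 𝒜 M D w.length (Matrix.vecMul ρ (Delta 𝒜 M D t')) t' := by
            rw [← Finset.add_sum_erase _ _ (Finset.mem_univ t)]
        _ ≤ M u t * (1 - Pw M t w) + ∑ t' ∈ Finset.univ.erase t, M u t' * 1 := by
            refine add_le_add hterm (Finset.sum_le_sum fun t' _ => ?_)
            exact mul_le_mul_of_nonneg_left (G_le_one 𝒜 M D hM _ _ _) (hM.1 u t')
        _ = M u t * 1 + ∑ t' ∈ Finset.univ.erase t, M u t' * 1 - M u t * Pw M t w := by ring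
        _ = 1 - Pw M u (t :: w) := by
            rw [Finset.add_sum_erase _ (fun t' => M u t' * 1) (Finset.mem_univ t)]
            simp only [mul_one, hM.2 u, Pw]

lemma vecMul_apply (ρ : ↥D → ℝ) (A : Matrix ↥D ↥D ℝ) (b : ↥D) :
    Matrix.vecMul ρ A b = ∑ e, ρ e * A e b := rfl

lemma rho_concat' (a : ↥D) (v : List S) (t : S) :
    rho 𝒜 M D a (v ++ [t]) = Matrix.vecMul (rho 𝒜 M D a v) (Delta 𝒜 M D t) := by
  rw [rho_append, deltaW_cons, deltaW_nil, Matrix.mul_one]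

lemma exists_pos_entry (hM : IsMarkov M) (s : S) : ∃ t, 0 < M s t := by
  by_contra h
  push_neg at h
  have : ∀ t, M s t = 0 := fun t => le_antisymm (h t) (hM.1 s t)
  have hsum := hM.2 s
  rw [Finset.sum_congr rfl fun t _ => this t, Finset.sum_const_zero] at hsum
  norm_num at hsum

lemma entry_le_one (hM : IsMarkov M) (u t : S) : M u t ≤ 1 := by
  rw [← hM.2 u]
  exact Finset.single_le_sum (fun t' _ => hM.1 u t') (Finset.mem_univ t)

/-- The least positive entry of `M`. -/
noncomputable def mpos : ℝ :=
  if h : ((Finset.univ.filter fun p : S × S => 0 < M p.1 p.2).image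
      fun p => M p.1 p.2).Nonempty
  then ((Finset.univ.filter fun p : S × S => 0 < M p.1 p.2).image
      fun p => M p.1 p.2).min' h
  else 1

lemma mpos_le {u t : S} (h : 0 < M u t) : mpos M ≤ M u t := by
  have hmem : M u t ∈ (Finset.univ.filter fun p : S × S => 0 < M p.1 p.2).image
      (fun p => M p.1 p.2) :=
    Finset.mem_image.mpr ⟨(u, t), Finset.mem_filter.mpr ⟨Finset.mem_univ _, h⟩, rfl⟩
  unfold mpos
  rw [dif_pos ⟨_, hmem⟩]
  exact Finset.min'_le _ _ hmem

lemma mpos_pos : 0 < mpos M := by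
  unfold mpos
  split
  · rename_i h
    obtain ⟨p, hp, hq⟩ := Finset.mem_image.mp (Finset.min'_mem _ h)
    rw [← hq]
    exact (Finset.mem_filter.mp hp).2
  · norm_num

lemma mpos_le_one (hM : IsMarkov M) (s : S) : mpos M ≤ 1 := by
  obtain ⟨t, ht⟩ := exists_pos_entry M hM s
  exact le_trans (mpos_le M ht) (entry_le_one M hM s t)

lemma Pw_ge (hM : IsMarkov M) : ∀ (w : List S) (u : S), Enabled M (u :: w) →
    mpos M ^ w.length ≤ Pw M u w := by
  intro w
  induction w with
  | nil => intro u _; rw [List.length_nil, pow_zero, Pw]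
  | cons t w ih =>
      intro u hen
      have h1 : 0 < M u t := by
        unfold Enabled at hen
        exact (List.isChain_cons_cons.mp hen).1
      have h2 : Enabled M (t :: w) := by
        unfold Enabled at *
        exact (List.isChain_cons_cons.mp hen).2
      rw [List.length_cons, pow_succ, mul_comm (mpos M ^ w.length) (mpos M)]
      exact mul_le_mul (mpos_le M h1) (ih t h2)
        (pow_nonneg (le_of_lt (mpos_pos M)) _) (hM.1 u t)

/-- `Kills b w`: the word `w` kills every row in the support `b`. -/
def Kills (b : ↥D → Bool) (w : List S) : Prop :=
  ∀ e : ↥D, b e = true → ∀ e' : ↥D, DeltaW 𝒜 M D w e e' = 0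

/-- A choice of killing word for each configuration. -/
noncomputable def kil (bu : (↥D → Bool) × S) : List S :=
  if h : ∃ w, Enabled M (bu.2 :: w) ∧ Kills 𝒜 M D bu.1 w then h.choose else []

/-- Uniform bound on the lengths of the chosen killing words. -/
noncomputable def klen : ℕ :=
  Finset.univ.sup fun bu : (↥D → Bool) × S => (kil 𝒜 M D bu).length

/-- `h(v) ≤ C · G_k`. -/
lemma h_le_CG (hM : IsMarkov M) (hND : ¬ 𝒜.HasDiamond) (y : ↥D → ℝ)
    (hynn : ∀ e, 0 ≤ y e) (heig : (subMat (Bmat 𝒜 M) D).mulVec y = y) (a : ↥D) :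
    ∀ (k : ℕ) (v : List S),
      hh 𝒜 M D y a v ≤ (∑ e, y e) * G 𝒜 M D k (rho 𝒜 M D a v) (uof (a : Q × S).2 v) := by
  intro k
  induction k with
  | zero =>
      intro v
      rw [G_zero_eq]
      by_cases hz : rho 𝒜 M D a v = 0
      · rw [if_pos hz, mul_zero]
        unfold hh dotProduct
        refine le_of_eq (Finset.sum_eq_zero fun e _ => ?_)
        rw [show rho 𝒜 M D a v e = 0 from congrFun hz e, zero_mul]
      · rw [if_neg hz, mul_one]
        unfold hh dotProduct
        refine Finset.sum_le_sum fun e _ => ?_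
        calc rho 𝒜 M D a v e * y e ≤ 1 * y e :=
              mul_le_mul_of_nonneg_right (deltaW_le_one 𝒜 M D hND v a e) (hynn e)
          _ = y e := one_mul _
  | succ k ih =>
      intro v
      rw [mart 𝒜 M D hM y heig a v, G_succ_eq, Finset.mul_sum]
      refine Finset.sum_le_sum fun t _ => ?_
      calc M (uof (a : Q × S).2 v) t * hh 𝒜 M D y a (v ++ [t])
          ≤ M (uof (a : Q × S).2 v) t *
              ((∑ e, y e) * G 𝒜 M D k (rho 𝒜 M D a (v ++ [t])) (uof (a : Q × S).2 (v ++ [t]))) :=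
            mul_le_mul_of_nonneg_left (ih (v ++ [t])) (hM.1 _ _)
        _ = (∑ e, y e) * (M (uof (a : Q × S).2 v) t *
              G 𝒜 M D k (Matrix.vecMul (rho 𝒜 M D a v) (Delta 𝒜 M D t)) t) := by
            rw [uof_concat, rho_concat']
            ring

/-- Existence of a cut: some enabled word from `a` whose fibre never dies. -/
lemma cut_exists (hM : IsMarkov M) (hND : ¬ 𝒜.HasDiamond) (y : ↥D → ℝ)
    (hypos : ∀ e, 0 < y e) (heig : (subMat (Bmat 𝒜 M) D).mulVec y = y) (a : ↥D) :
    ∃ v₀ : List S, Enabled M ((a : Q × S).2 :: v₀) ∧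
      ∀ w, Enabled M ((a : Q × S).2 :: (v₀ ++ w)) → rho 𝒜 M D a (v₀ ++ w) ≠ 0 := by
  by_contra hno
  push_neg at hno
  set s := (a : Q × S).2 with hs
  have hkiller : ∀ v, Enabled M (s :: v) →
      ∃ w, Enabled M (uof s v :: w) ∧
        Kills 𝒜 M D (fun e => decide (rho 𝒜 M D a v e ≠ 0)) w := by
    intro v hv
    obtain ⟨w, hw, hzero⟩ := hno v hv
    refine ⟨w, enabled_suffix M hw, ?_⟩
    intro e hbe e'
    have h0 : rho 𝒜 M D a (v ++ w) e' = 0 := by rw [hzero]; rfl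
    rw [rho_append, vecMul_apply] at h0
    have hterm := (Finset.sum_eq_zero_iff_of_nonneg fun x _ =>
      mul_nonneg (rho_nonneg 𝒜 M D a v x) (deltaW_nonneg 𝒜 M D w x e')).mp h0 e
      (Finset.mem_univ e)
    rcases mul_eq_zero.mp hterm with h | h
    · exact absurd h (of_decide_eq_true hbe)
    · exact h
  set L := klen 𝒜 M D with hL
  set δ := mpos M ^ L with hd
  have hδpos : 0 < δ := pow_pos (mpos_pos M) L
  have hδle : δ ≤ 1 := pow_le_one₀ (le_of_lt (mpos_pos M)) (mpos_le_one M hM s)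
  have decay1 : ∀ v, Enabled M (s :: v) →
      G 𝒜 M D L (rho 𝒜 M D a v) (uof s v) ≤ 1 - δ := by
    intro v hv
    by_cases hlive : rho 𝒜 M D a v = 0
    · rw [hlive, G_of_zero 𝒜 M D hM]
      linarith
    · set b := fun e => decide (rho 𝒜 M D a v e ≠ 0) with hb
      have hex : ∃ w, Enabled M (((b, uof s v) : (↥D → Bool) × S).2 :: w) ∧
          Kills 𝒜 M D b w := hkiller v hv
      have hwspec : Enabled M (uof s v :: kil 𝒜 M D (b, uof s v)) ∧
          Kills 𝒜 M D b (kil 𝒜 M D (b, uof s v)) := by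
        unfold kil
        rw [dif_pos hex]
        exact hex.choose_spec
      set w := kil 𝒜 M D (b, uof s v) with hwdef
      have hkillv : Matrix.vecMul (rho 𝒜 M D a v) (DeltaW 𝒜 M D w) = 0 := by
        funext e'
        rw [vecMul_apply]
        refine Finset.sum_eq_zero fun e _ => ?_
        by_cases hz : rho 𝒜 M D a v e = 0
        · rw [hz, zero_mul]
        · rw [hwspec.2 e (decide_eq_true hz) e', mul_zero]
      calc G 𝒜 M D L (rho 𝒜 M D a v) (uof s v)
          ≤ G 𝒜 M D w.length (rho 𝒜 M D a v) (uof s v) := by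
            refine G_anti 𝒜 M D hM ?_ _ _
            rw [hwdef, hL]
            unfold klen
            exact Finset.le_sup (f := fun bu => (kil 𝒜 M D bu).length) (Finset.mem_univ (b, uof s v))
        _ ≤ 1 - Pw M (uof s v) w :=
            G_killed 𝒜 M D hM w _ _ (rho_nonneg 𝒜 M D a v) hkillv
        _ ≤ 1 - δ := by
            have hwL : w.length ≤ L := by
              rw [hwdef, hL]
              unfold klen
              exact Finset.le_sup (f := fun bu => (kil 𝒜 M D bu).length) (Finset.mem_univ (b, uof s v))
            have h1 : δ ≤ mpos M ^ w.length :=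
              pow_le_pow_of_le_one (le_of_lt (mpos_pos M)) (mpos_le_one M hM s) hwL
            have h2 : mpos M ^ w.length ≤ Pw M (uof s v) w := Pw_ge M hM w _ hwspec.1
            linarith
  have decayn : ∀ (n : ℕ) (v : List S), Enabled M (s :: v) →
      G 𝒜 M D (n + L) (rho 𝒜 M D a v) (uof s v)
        ≤ (1 - δ) * G 𝒜 M D n (rho 𝒜 M D a v) (uof s v) := by
    intro n
    induction n with
    | zero =>
        intro v hv
        rw [Nat.zero_add, G_zero_eq]
        by_cases hz : rho 𝒜 M D a v = 0
        · rw [if_pos hz, hz, G_of_zero 𝒜 M D hM, mul_zero]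
        · rw [if_neg hz, mul_one]
          exact decay1 v hv
    | succ n ih =>
        intro v hv
        rw [show n + 1 + L = (n + L) + 1 from by omega, G_succ_eq, G_succ_eq,
          Finset.mul_sum]
        refine Finset.sum_le_sum fun t _ => ?_
        rcases eq_or_lt_of_le (hM.1 (uof s v) t) with hmz | hmpos
        · rw [← hmz, zero_mul, zero_mul, mul_zero]
        · have hen' : Enabled M (s :: (v ++ [t])) := enabled_concat M hv hmpos
          have hih := ih (v ++ [t]) hen'
          rw [uof_concat, rho_concat' 𝒜 M D a v t] at hih
          calc M (uof s v) t * G 𝒜 M D (n + L)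
                (Matrix.vecMul (rho 𝒜 M D a v) (Delta 𝒜 M D t)) t
              ≤ M (uof s v) t *
                ((1 - δ) * G 𝒜 M D n (Matrix.vecMul (rho 𝒜 M D a v) (Delta 𝒜 M D t)) t) :=
                mul_le_mul_of_nonneg_left hih (le_of_lt hmpos)
            _ = (1 - δ) * (M (uof s v) t *
                G 𝒜 M D n (Matrix.vecMul (rho 𝒜 M D a v) (Delta 𝒜 M D t)) t) := by ring
  have geom : ∀ j : ℕ, G 𝒜 M D (j * L) (rho 𝒜 M D a []) s ≤ (1 - δ) ^ j := by
    intro j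
    induction j with
    | zero =>
        rw [Nat.zero_mul, pow_zero]
        exact G_le_one 𝒜 M D hM 0 _ _
    | succ j ih =>
        have h1 := decayn (j * L) [] (by unfold Enabled; exact List.isChain_singleton s)
        rw [uof_nil] at h1
        calc G 𝒜 M D ((j + 1) * L) (rho 𝒜 M D a []) s
            = G 𝒜 M D (j * L + L) (rho 𝒜 M D a []) s := by rw [Nat.succ_mul]
          _ ≤ (1 - δ) * G 𝒜 M D (j * L) (rho 𝒜 M D a []) s := h1
          _ ≤ (1 - δ) * (1 - δ) ^ j :=
              mul_le_mul_of_nonneg_left ih (by linarith)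
          _ = (1 - δ) ^ (j + 1) := by rw [pow_succ]; ring
  have hya : hh 𝒜 M D y a [] = y a := by
    unfold hh dotProduct
    rw [Finset.sum_congr rfl fun b _ => by rw [congrFun (rho_nil 𝒜 M D a) b]]
    simp
  have hCpos : 0 < ∑ e, y e :=
    Finset.sum_pos (fun e _ => hypos e) ⟨a, Finset.mem_univ a⟩
  obtain ⟨j, hj⟩ := exists_pow_lt_of_lt_one (div_pos (hypos a) hCpos)
    (show 1 - δ < 1 by linarith)
  have hbound := h_le_CG 𝒜 M D hM hND y (fun e => le_of_lt (hypos e)) heig a (j * L) []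
  rw [hya, uof_nil] at hbound
  have hle : y a ≤ (∑ e, y e) * (1 - δ) ^ j :=
    le_trans hbound (mul_le_mul_of_nonneg_left (geom j) (le_of_lt hCpos))
  have hlt : (∑ e, y e) * (1 - δ) ^ j < y a := by
    have := mul_lt_mul_of_pos_left hj hCpos
    rwa [mul_div_cancel₀ _ (ne_of_gt hCpos)] at this
  linarith

lemma rho_01 (hND : ¬ 𝒜.HasDiamond) (a : ↥D) (v : List S) (e : ↥D) :
    rho 𝒜 M D a v e = 0 ∨ rho 𝒜 M D a v e = 1 := by
  unfold rho
  rw [deltaW_eq_card]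
  rcases Nat.le_one_iff_eq_zero_or_eq_one.mp (runs_card_le_one 𝒜 M D hND v a e) with h | h <;>
    rw [h]
  · left; norm_num
  · right; norm_num

lemma rtg_word {x z : Q × S}
    (h : Relation.ReflTransGen (fun p q => 0 < Bmat 𝒜 M p q) x z) :
    ∃ w₂ : List S, Enabled M (x.2 :: w₂) ∧ uof x.2 w₂ = z.2 := by
  induction h with
  | refl => exact ⟨[], by unfold Enabled; exact List.isChain_singleton _, rfl⟩
  | @tail b c hxb hbc ih =>
      obtain ⟨w₂, hen, hlast⟩ := ih
      have hM' : 0 < M b.2 c.2 := by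
        unfold Bmat at hbc
        rw [Matrix.of_apply] at hbc
        split at hbc
        · exact hbc
        · exact absurd hbc (lt_irrefl 0)
      exact ⟨w₂ ++ [c.2], enabled_concat M hen (by rwa [hlast]), uof_concat _ _ _⟩

/-- Main construction: a word `v` ending back at the letter of `a`, on whose
continuations `h` is constant equal to some `β > 0`. -/
lemma exists_flat (hM : IsMarkov M) (hND : ¬ 𝒜.HasDiamond)
    (hD : IsSCC (Bmat 𝒜 M) D) (y : ↥D → ℝ) (hypos : ∀ e, 0 < y e)
    (heig : (subMat (Bmat 𝒜 M) D).mulVec y = y) (a : ↥D) :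
    ∃ (v : List S) (β : ℝ), 0 < β ∧ Enabled M ((a : Q × S).2 :: v) ∧
      uof (a : Q × S).2 v = (a : Q × S).2 ∧
      ∀ w, Enabled M ((a : Q × S).2 :: (v ++ w)) → hh 𝒜 M D y a (v ++ w) = β := by
  obtain ⟨v₀, hv₀, hcut⟩ := cut_exists 𝒜 M D hM hND y hypos heig a
  set s := (a : Q × S).2 with hs
  -- finite set of possible values of hh
  set Fvals : Finset ℝ :=
    Finset.image (fun bb : ↥D → Bool => ∑ e, if bb e then y e else 0) Finset.univ with hFvals
  have hval : ∀ v : List S, hh 𝒜 M D y a v ∈ Fvals := by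
    intro v
    rw [hFvals]
    refine Finset.mem_image.mpr ⟨fun e => decide (rho 𝒜 M D a v e ≠ 0), Finset.mem_univ _, ?_⟩
    unfold hh dotProduct
    refine (Finset.sum_congr rfl fun e _ => ?_).symm
    rcases rho_01 𝒜 M D hND a v e with h | h
    · rw [h, zero_mul, if_neg]
      simp [h]
    · rw [h, one_mul, if_pos]
      simp [h]
  set A : Set ℝ := {x | ∃ w, Enabled M (s :: (v₀ ++ w)) ∧ hh 𝒜 M D y a (v₀ ++ w) = x}
    with hA
  have hAsub : A ⊆ ↑Fvals := by
    rintro x ⟨w, -, rfl⟩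
    exact hval _
  have hfin : A.Finite := Set.Finite.subset (Fvals.finite_toSet) hAsub
  have hne : A.Nonempty :=
    ⟨hh 𝒜 M D y a v₀, [], by rw [List.append_nil]; exact hv₀, by rw [List.append_nil]⟩
  have hne' : hfin.toFinset.Nonempty := by
    obtain ⟨x, hx⟩ := hne
    exact ⟨x, (Set.Finite.mem_toFinset hfin).mpr hx⟩
  set β := hfin.toFinset.min' hne' with hβ
  have hβA : β ∈ A := by
    have := Finset.min'_mem _ hne'
    rwa [Set.Finite.mem_toFinset] at this
  have hβle : ∀ x ∈ A, β ≤ x := fun x hx =>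
    Finset.min'_le _ _ ((Set.Finite.mem_toFinset hfin).mpr hx)
  obtain ⟨w₁, hw₁en, hw₁eq⟩ := hβA
  -- β is positive since the fibre never dies
  have hβpos : 0 < β := by
    rw [← hw₁eq]
    have hnz := hcut w₁ hw₁en
    have hex : ∃ e, rho 𝒜 M D a (v₀ ++ w₁) e ≠ 0 := by
      by_contra hc
      push_neg at hc
      exact hnz (funext fun e => hc e)
    obtain ⟨e₀, he₀⟩ := hex
    unfold hh dotProduct
    refine Finset.sum_pos' (fun e _ => mul_nonneg (rho_nonneg 𝒜 M D a _ e)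
      (le_of_lt (hypos e))) ⟨e₀, Finset.mem_univ e₀, ?_⟩
    exact mul_pos (lt_of_le_of_ne (rho_nonneg 𝒜 M D a _ e₀) (Ne.symm he₀)) (hypos e₀)
  -- monotonicity: all later values are ≥ β
  have hmin' : ∀ w, Enabled M (s :: ((v₀ ++ w₁) ++ w)) → β ≤ hh 𝒜 M D y a ((v₀ ++ w₁) ++ w) := by
    intro w hw
    refine hβle _ ⟨w₁ ++ w, ?_, ?_⟩
    · rwa [← List.append_assoc]
    · rw [← List.append_assoc]
  -- flatness on all continuations of v₀ ++ w₁
  have hflat : ∀ w, Enabled M (s :: ((v₀ ++ w₁) ++ w)) →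
      hh 𝒜 M D y a ((v₀ ++ w₁) ++ w) = β := by
    intro w
    induction w using List.reverseRecOn with
    | nil => intro _; rw [List.append_nil]; exact hw₁eq
    | append_singleton w t ihw =>
        intro hwen
        rw [← List.append_assoc] at hwen
        have hpre : Enabled M (s :: ((v₀ ++ w₁) ++ w)) := enabled_prefix M hwen
        have hV := ihw hpre
        have hMt : 0 < M (uof s ((v₀ ++ w₁) ++ w)) t := enabled_last M hwen
        have hmart := mart 𝒜 M D hM y heig a ((v₀ ++ w₁) ++ w)
        rw [← hs] at hmart
        have hfnn : ∀ t', 0 ≤ M (uof s ((v₀ ++ w₁) ++ w)) t' *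
            (hh 𝒜 M D y a (((v₀ ++ w₁) ++ w) ++ [t']) - β) := by
          intro t'
          rcases eq_or_lt_of_le (hM.1 (uof s ((v₀ ++ w₁) ++ w)) t') with hz | hpos
          · rw [← hz, zero_mul]
          · refine mul_nonneg (le_of_lt hpos) (sub_nonneg.mpr ?_)
            have hen' : Enabled M (s :: (((v₀ ++ w₁) ++ w) ++ [t'])) := by
              refine enabled_concat M ?_ hpos
              exact hpre
            rw [List.append_assoc (v₀ ++ w₁) w [t']] at hen' ⊢
            exact hmin' (w ++ [t']) hen'
        have hsum : ∑ t', M (uof s ((v₀ ++ w₁) ++ w)) t' *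
            (hh 𝒜 M D y a (((v₀ ++ w₁) ++ w) ++ [t']) - β) = 0 := by
          have hrow := hM.2 (uof s ((v₀ ++ w₁) ++ w))
          calc ∑ t', M (uof s ((v₀ ++ w₁) ++ w)) t' *
              (hh 𝒜 M D y a (((v₀ ++ w₁) ++ w) ++ [t']) - β)
              = (∑ t', M (uof s ((v₀ ++ w₁) ++ w)) t' *
                  hh 𝒜 M D y a (((v₀ ++ w₁) ++ w) ++ [t']))
                - (∑ t', M (uof s ((v₀ ++ w₁) ++ w)) t') * β := by
                rw [Finset.sum_mul, ← Finset.sum_sub_distrib]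
                refine Finset.sum_congr rfl fun t' _ => ?_
                ring
            _ = hh 𝒜 M D y a ((v₀ ++ w₁) ++ w) - β := by rw [← hmart, hrow, one_mul]
            _ = 0 := by rw [hV, sub_self]
        have hzero := (Finset.sum_eq_zero_iff_of_nonneg fun t' _ => hfnn t').mp hsum t
          (Finset.mem_univ t)
        have : hh 𝒜 M D y a (((v₀ ++ w₁) ++ w) ++ [t]) - β = 0 := by
          rcases mul_eq_zero.mp hzero with h | h
          · exact absurd h (ne_of_gt hMt)
          · exact h
        rw [← List.append_assoc]
        linarith [this]
  -- route back to the letter s via strong connectivity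
  have hnz := hcut w₁ hw₁en
  have hex : ∃ e, rho 𝒜 M D a (v₀ ++ w₁) e ≠ 0 := by
    by_contra hc
    push_neg at hc
    exact hnz (funext fun e => hc e)
  obtain ⟨e', he'⟩ := hex
  have he'u : (e' : Q × S).2 = uof s (v₀ ++ w₁) := rho_snd 𝒜 M D he'
  obtain ⟨p₀, hp₀⟩ := hD
  have he'mem := (Set.ext_iff.mp hp₀ (e' : Q × S)).mp e'.property
  have hamem := (Set.ext_iff.mp hp₀ (a : Q × S)).mp a.property
  have h3 : Relation.ReflTransGen (fun p q => 0 < Bmat 𝒜 M p q) (e' : Q × S) (a : Q × S) :=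
    he'mem.2.trans hamem.1
  obtain ⟨w₂, hw₂en, hw₂last⟩ := rtg_word 𝒜 M h3
  refine ⟨(v₀ ++ w₁) ++ w₂, β, hβpos, ?_, ?_, ?_⟩
  · exact enabled_glue M hw₁en (by rw [he'u] at hw₂en; exact hw₂en)
  · rw [uof_append, ← he'u, hw₂last]
  · intro w hw
    rw [List.append_assoc (v₀ ++ w₁) w₂ w] at hw ⊢
    exact hflat (w₂ ++ w) hw

end Stmt10Aux



/-- the coefficients of `Δ′(s)Δ(w)y` over the basis `R(s)` sum to `1`. -/
theorem stmt_10 {Q S : Type} [Fintype Q] [Fintype S]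
    (𝒜 : BA Q S) (M : Matrix S S ℝ) (hM : IsMarkov M)
    (hU : 𝒜.Unambiguous) (hND : ¬ 𝒜.HasDiamond) (hAR : 𝒜.AllReachable)
    (D : Set (Q × S)) (hD : IsSCC (Bmat 𝒜 M) D)
    (hrec : RecurrentSCC 𝒜 M D) (hacc : AcceptingSCC 𝒜 D)
    (d : Q × S) (hd : d ∈ D)
    (y : ↥D → ℝ) (hypos : ∀ p, 0 < y p)
    (heig : (subMat (Bmat 𝒜 M) D).mulVec y = y)
    (R : Finset (↥D → ℝ))
    (hind : LinearIndependent ℝ (fun r : {x // x ∈ R} => (r : ↥D → ℝ)))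
    (hspan : Submodule.span ℝ (↑R : Set (↥D → ℝ)) = Vspace 𝒜 M D y d.2)
    (hform : ∀ r ∈ R, ∃ w : List S, Enabled M (d.2 :: w) ∧
      r = (Delta' D d.2 * DeltaW 𝒜 M D w).mulVec y)
    (w : List S) (hw : Enabled M (d.2 :: w))
    (γ : (↥D → ℝ) → ℝ)
    (hγ : (Delta' D d.2 * DeltaW 𝒜 M D w).mulVec y = ∑ r ∈ R, γ r • r) :
    ∑ r ∈ R, γ r = 1 := by
  classical
  set a : ↥D := ⟨d, hd⟩ with ha
  obtain ⟨v, β, hβpos, hven, hvlast, hflat⟩ :=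
    Stmt10Aux.exists_flat 𝒜 M D hM hND hD y hypos heig a
  have keyval : ∀ w', Enabled M (d.2 :: w') →
      dotProduct (Stmt10Aux.rho 𝒜 M D a v)
        ((Delta' D d.2 * DeltaW 𝒜 M D w').mulVec y) = β := by
    intro w' hw'
    rw [Matrix.dotProduct_mulVec]
    have hsupp : ∀ e : ↥D, Stmt10Aux.rho 𝒜 M D a v e ≠ 0 → (e : Q × S).2 = d.2 := by
      intro e he
      have h2 := Stmt10Aux.rho_snd 𝒜 M D he
      rw [hvlast] at h2
      exact h2
    have hproj : Matrix.vecMul (Stmt10Aux.rho 𝒜 M D a v) (Delta' D d.2 * DeltaW 𝒜 M D w')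
        = Stmt10Aux.rho 𝒜 M D a (v ++ w') := by
      rw [← Matrix.vecMul_vecMul]
      have hid : Matrix.vecMul (Stmt10Aux.rho 𝒜 M D a v) (Delta' D d.2)
          = Stmt10Aux.rho 𝒜 M D a v := by
        funext b
        rw [Stmt10Aux.vecMul_apply]
        rw [Finset.sum_eq_single_of_mem b (Finset.mem_univ b)]
        · by_cases hb2 : (b : Q × S).2 = d.2
          · unfold Delta'
            rw [Matrix.of_apply, if_pos ⟨rfl, hb2⟩, mul_one]
          · have hz : Stmt10Aux.rho 𝒜 M D a v b = 0 := by
              by_contra h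
              exact hb2 (hsupp b h)
            rw [hz, zero_mul]
        · intro e _ hne
          unfold Delta'
          rw [Matrix.of_apply, if_neg, mul_zero]
          intro hc
          exact hne hc.1
      rw [hid, ← Stmt10Aux.rho_append]
    rw [hproj]
    have hen : Enabled M (d.2 :: (v ++ w')) := by
      refine Stmt10Aux.enabled_glue M hven ?_
      rw [hvlast]
      exact hw'
    have hfl := hflat w' hen
    unfold Stmt10Aux.hh at hfl
    exact hfl
  have lhs := keyval w hw
  rw [hγ] at lhs
  have hdot : dotProduct (Stmt10Aux.rho 𝒜 M D a v) (∑ r ∈ R, γ r • r)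
      = ∑ r ∈ R, γ r * β := by
    unfold dotProduct
    calc ∑ e, Stmt10Aux.rho 𝒜 M D a v e * (∑ r ∈ R, γ r • r) e
        = ∑ e, ∑ r ∈ R, Stmt10Aux.rho 𝒜 M D a v e * (γ r * r e) := by
          refine Finset.sum_congr rfl fun e _ => ?_
          rw [Finset.sum_apply, Finset.mul_sum]
          refine Finset.sum_congr rfl fun r _ => ?_
          rw [Pi.smul_apply, smul_eq_mul]
      _ = ∑ r ∈ R, ∑ e, Stmt10Aux.rho 𝒜 M D a v e * (γ r * r e) := Finset.sum_comm
      _ = ∑ r ∈ R, γ r * β := by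
          refine Finset.sum_congr rfl fun r hr => ?_
          obtain ⟨wr, hwr, hreq⟩ := hform r hr
          have hv := keyval wr hwr
          rw [← hreq] at hv
          calc ∑ e, Stmt10Aux.rho 𝒜 M D a v e * (γ r * r e)
              = γ r * ∑ e, Stmt10Aux.rho 𝒜 M D a v e * r e := by
                rw [Finset.mul_sum]
                refine Finset.sum_congr rfl fun e _ => ?_
                ring
            _ = γ r * β := by rw [show ∑ e, Stmt10Aux.rho 𝒜 M D a v e * r e = β from hv]
  rw [hdot] at lhs
  have hfin : (∑ r ∈ R, γ r) * β = 1 * β := by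
    rw [Finset.sum_mul, one_mul]
    exact lhs
  exact mul_right_cancel₀ (ne_of_gt hβpos) hfin
end

section
/- Fix a total order < on S and define the strict order ≪ on S* by: ε ≪ u for every nonempty u ∈ S*, and vs ≪ wt (for v, w ∈ S* and s, t ∈ S) iff |vs| < |wt|, or |vs| = |wt| and s < t, or |vs| = |wt|, s = t and v ≪ w. Let D be a recurrent SCC of B and y ∈ ℝ^D. Let t ∈ S and x ∈ S*, let U ⊆ S* be a finite set of words with u ≪ x for all u ∈ U, and suppose Δ′(t)Δ(x)y = Σ_{u∈U} γ_u Δ′(t)Δ(u)y for some γ_u ∈ ℝ. Then for every s ∈ S and w ∈ S* there exist a finite set U′ ⊆ S* of words with u′ ≪ w t x for all u′ ∈ U′ and coefficients γ′_{u′} ∈ ℝ such that Δ′(s)Δ(w t x)y = Σ_{u′∈U′} γ′_{u′} Δ′(s)Δ(u′)y. -/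
open Matrix MeasureTheory

attribute [local instance] Classical.propDecidable

lemma revLT_of_len_lt {S : Type} [LinearOrder S] {v w : List S}
    (h : v.length < w.length) : revLT v w := by
  cases v with
  | nil => cases w with
    | nil => simp at h
    | cons b w' => simp [revLT]
  | cons a v' => cases w with
    | nil => simp at h
    | cons b w' => exact Or.inl h

lemma revLT_append {S : Type} [LinearOrder S] (z : List S) :
    ∀ v w : List S, revLT v w → revLT (v ++ z) (w ++ z) := by
  intro v
  induction v with
  | nil =>
    intro w h
    cases w with
    | nil => simp [revLT] at h
    | cons b w' =>
      apply revLT_of_len_lt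
      simp
  | cons a v' ih =>
    intro w h
    cases w with
    | nil => simp [revLT] at h
    | cons b w' =>
      rcases h with h | ⟨hlen, h⟩
      · exact revLT_of_len_lt (by simpa using Nat.add_lt_add_right (by simpa using h) z.length)
      · refine Or.inr ⟨by simp [Nat.succ_injective (by simpa using hlen)] , ?_⟩
        rcases h with h | ⟨rfl, h⟩
        · exact Or.inl h
        · exact Or.inr ⟨rfl, ih w' h⟩

lemma wordLT_append_cons {S : Type} [LinearOrder S] {u x : List S} (t : S) (w : List S)
    (h : wordLT u x) : wordLT (w ++ t :: u) (w ++ t :: x) := by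
  unfold wordLT at *
  have h1 : (w ++ t :: u).reverse = u.reverse ++ (t :: w.reverse) := by simp
  have h2 : (w ++ t :: x).reverse = x.reverse ++ (t :: w.reverse) := by simp
  rw [h1, h2]
  exact revLT_append _ _ _ h

lemma DeltaW_append {Q S : Type} [Fintype Q] [Fintype S]
    (𝒜 : BA Q S) (M : Matrix S S ℝ) (D : Set (Q × S)) (v w : List S) :
    DeltaW 𝒜 M D (v ++ w) = DeltaW 𝒜 M D v * DeltaW 𝒜 M D w := by
  induction v with
  | nil => simp [DeltaW]
  | cons a v' ih => simp [DeltaW, ih, Matrix.mul_assoc]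

lemma Delta_mul_Delta' {Q S : Type} [Fintype Q] [Fintype S]
    (𝒜 : BA Q S) (M : Matrix S S ℝ) (D : Set (Q × S)) (t : S) :
    Delta 𝒜 M D t * Delta' D t = Delta 𝒜 M D t := by
  ext p p'
  rw [Matrix.mul_apply]
  rw [Finset.sum_eq_single p']
  · simp only [Delta, Delta', Matrix.of_apply]
    by_cases h : (p' : Q × S).2 = t ∧ 0 < M (p : Q × S).2 t ∧
        (p' : Q × S).1 ∈ 𝒜.delta (p : Q × S).1 (p : Q × S).2
    · simp [h, h.1]
    · simp [h]
  · intro k _ hk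
    simp [Delta', hk]
  · simp


/-- pushing a linear dependency of `Δ′(t)Δ(x)y` on `≪`-smaller words
through to `Δ′(s)Δ(w t x)y`. -/
theorem stmt_12 {Q S : Type} [Fintype Q] [Fintype S] [LinearOrder S]
    (𝒜 : BA Q S) (M : Matrix S S ℝ) (hM : IsMarkov M)
    (D : Set (Q × S)) (hD : IsSCC (Bmat 𝒜 M) D) (hrec : RecurrentSCC 𝒜 M D)
    (y : ↥D → ℝ)
    (t : S) (x : List S)
    (U : Finset (List S)) (hU : ∀ u ∈ U, wordLT u x)
    (γ : List S → ℝ)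
    (hrep : (Delta' D t * DeltaW 𝒜 M D x).mulVec y =
      ∑ u ∈ U, γ u • (Delta' D t * DeltaW 𝒜 M D u).mulVec y) :
    ∀ (s : S) (w : List S),
      ∃ (U' : Finset (List S)) (γ' : List S → ℝ),
        (∀ u' ∈ U', wordLT u' (w ++ t :: x)) ∧
        (Delta' D s * DeltaW 𝒜 M D (w ++ t :: x)).mulVec y =
          ∑ u' ∈ U', γ' u' • (Delta' D s * DeltaW 𝒜 M D u').mulVec y := by
  intro s w
  classical
  refine ⟨U.image (fun u => w ++ t :: u), fun u' => γ (u'.drop (w.length + 1)), ?_, ?_⟩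
  · intro u' hu'
    simp only [Finset.mem_image] at hu'
    obtain ⟨u, hu, rfl⟩ := hu'
    exact wordLT_append_cons t w (hU u hu)
  · have hinj : ∀ u₁ ∈ U, ∀ u₂ ∈ U, w ++ t :: u₁ = w ++ t :: u₂ → u₁ = u₂ := by
      intro u₁ _ u₂ _ h
      have := List.append_cancel_left h
      simpa using this
    rw [Finset.sum_image hinj]
    have hdrop : ∀ u : List S, (w ++ t :: u).drop (w.length + 1) = u := by
      intro u
      rw [show w ++ t :: u = (w ++ [t]) ++ u by simp, List.drop_left' (by simp)]
    have key : ∀ u : List S, Delta' D s * DeltaW 𝒜 M D (w ++ t :: u) =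
        (Delta' D s * DeltaW 𝒜 M D w * Delta 𝒜 M D t) * (Delta' D t * DeltaW 𝒜 M D u) := by
      intro u
      rw [DeltaW_append]
      conv_lhs => rw [show DeltaW 𝒜 M D (t :: u) = Delta 𝒜 M D t * DeltaW 𝒜 M D u from rfl,
        ← Delta_mul_Delta' 𝒜 M D t]
      simp only [Matrix.mul_assoc]
    rw [key x, ← Matrix.mulVec_mulVec, hrep]
    rw [show ((Delta' D s * DeltaW 𝒜 M D w * Delta 𝒜 M D t)).mulVec
        (∑ u ∈ U, γ u • (Delta' D t * DeltaW 𝒜 M D u).mulVec y)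
        = ∑ u ∈ U, γ u • ((Delta' D s * DeltaW 𝒜 M D w * Delta 𝒜 M D t)).mulVec
            ((Delta' D t * DeltaW 𝒜 M D u).mulVec y) from by
      rw [← Matrix.mulVecLin_apply, map_sum]
      simp [Matrix.mulVecLin_apply, Matrix.mulVec_smul, Matrix.mul_assoc]]
    refine Finset.sum_congr rfl fun u hu => ?_
    simp only [hdrop]
    rw [key u]
    simp [Matrix.mul_assoc]
end

section
/- Every SCC D of B satisfies ρ(B_{D,D}) ≤ 1, where ρ denotes the spectral radius. -/
open Matrix MeasureTheory

attribute [local instance] Classical.propDecidable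

section AuxStmt15

namespace BA
variable {Q' A' : Type}

lemma isRun_ne_nil' (𝒜 : BA Q' A') : ∀ (w : List A') (q r : Q') (ρ : List Q'),
    𝒜.IsRun q w ρ r → ρ ≠ [] := by
  intro w q r ρ h
  cases w with
  | nil => obtain ⟨_, rfl⟩ := h; simp
  | cons a w => obtain ⟨q', ρ', rfl, _, _⟩ := h; simp

lemma isRun_getLast' (𝒜 : BA Q' A') : ∀ (w : List A') (q r : Q') (ρ : List Q'),
    𝒜.IsRun q w ρ r → ρ.getLast? = some r := by
  intro w
  induction w with
  | nil => intro q r ρ h; obtain ⟨rfl, rfl⟩ := h; rfl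
  | cons a w ih =>
    intro q r ρ h
    obtain ⟨q', ρ', rfl, _, hrun⟩ := h
    have hne := 𝒜.isRun_ne_nil' w q' r ρ' hrun
    obtain ⟨b, l, rfl⟩ := List.exists_cons_of_ne_nil hne
    rw [List.getLast?_cons_cons]
    exact ih q' r _ hrun

lemma isRun_append' (𝒜 : BA Q' A') : ∀ (w : List A') (q r : Q') (ρ : List Q') (a : A') (r' : Q'),
    𝒜.IsRun q w ρ r → r' ∈ 𝒜.delta r a → 𝒜.IsRun q (w ++ [a]) (ρ ++ [r']) r' := by
  intro w
  induction w with
  | nil =>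
    intro q r ρ a r' h hd
    obtain ⟨rfl, rfl⟩ := h
    exact ⟨r', [r'], rfl, hd, rfl, rfl⟩
  | cons b w ih =>
    intro q r ρ a r' h hd
    obtain ⟨q', ρ', rfl, hq', hrun⟩ := h
    exact ⟨q', ρ' ++ [r'], rfl, hq', ih q' r ρ' a r' hrun hd⟩
end BA

section KeyStmt15
variable {Q S : Type} [Fintype Q] [Fintype S]

lemma markov_pow_nonneg' {M : Matrix S S ℝ} (hM : IsMarkov M) (n : ℕ) :
    ∀ s t, 0 ≤ (M ^ n) s t := by
  induction n with
  | zero => intro s t; rw [pow_zero, Matrix.one_apply]; split <;> norm_num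
  | succ n ih =>
    intro s t
    rw [pow_succ, Matrix.mul_apply]
    exact Finset.sum_nonneg fun k _ => mul_nonneg (ih s k) (hM.1 k t)

lemma markov_pow_rowsum' {M : Matrix S S ℝ} (hM : IsMarkov M) (n : ℕ) :
    ∀ s, ∑ t, (M ^ n) s t = 1 := by
  induction n with
  | zero => intro s; simp [Matrix.one_apply]
  | succ n ih =>
    intro s
    simp only [pow_succ, Matrix.mul_apply]
    rw [Finset.sum_comm]
    calc ∑ k, ∑ t, (M ^ n) s k * M k t = ∑ k, (M ^ n) s k * ∑ t, M k t := by
          simp [Finset.mul_sum]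
      _ = 1 := by simp only [hM.2]; simpa using ih s

lemma markov_pow_le_one' {M : Matrix S S ℝ} (hM : IsMarkov M) (n : ℕ) (s t : S) :
    (M ^ n) s t ≤ 1 := by
  calc (M ^ n) s t ≤ ∑ u, (M ^ n) s u :=
        Finset.single_le_sum (fun u _ => markov_pow_nonneg' hM n s u) (Finset.mem_univ t)
    _ = 1 := markov_pow_rowsum' hM n s

omit [Fintype Q] in
lemma bmat_nonneg' {𝒜 : BA Q S} {M : Matrix S S ℝ} (hM : IsMarkov M) (p p' : Q × S) :
    0 ≤ Bmat 𝒜 M p p' := by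
  unfold Bmat
  simp only [Matrix.of_apply]
  split
  · exact hM.1 _ _
  · exact le_refl 0

lemma key_count' (𝒜 : BA Q S) (M : Matrix S S ℝ) (hM : IsMarkov M)
    (hND : ¬ 𝒜.HasDiamond) :
    ∀ (n : ℕ) (s s' : S) (q' q₀ : Q) (u : List S) (T : Finset Q),
      (∀ q'' ∈ T, ∃ ρ, 𝒜.IsRun q₀ u ρ q'') →
      ∑ q'' ∈ T, (Bmat 𝒜 M ^ n) (q'', s) (q', s') ≤ (M ^ n) s s' := by
  intro n
  induction n with
  | zero =>
    intro s s' q' q₀ u T _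
    simp only [pow_zero, Matrix.one_apply, Prod.mk.injEq]
    by_cases hs : s = s'
    · subst hs
      simp only [and_true]
      rw [Finset.sum_ite_eq' T q' (fun _ => (1 : ℝ))]
      split <;> simp [Matrix.one_apply]
    · have : ∀ q'' ∈ T, (if q'' = q' ∧ s = s' then (1:ℝ) else 0) = 0 := by
        intro q'' _; simp [hs]
      rw [Finset.sum_congr rfl this]
      simp [Matrix.one_apply, hs, markov_pow_nonneg' hM 0]
  | succ n ih =>
    intro s s' q' q₀ u T hT
    set next : Q → Finset Q := fun q'' => Finset.univ.filter (fun q''' => q''' ∈ 𝒜.delta q'' s) with hnext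
    set T' : Finset Q := T.biUnion next with hT'
    have hdisj : ∀ q₁ ∈ T, ∀ q₂ ∈ T, q₁ ≠ q₂ → Disjoint (next q₁) (next q₂) := by
      intro q₁ h₁ q₂ h₂ hne
      rw [Finset.disjoint_left]
      intro q''' hm₁ hm₂
      simp only [hnext, Finset.mem_filter] at hm₁ hm₂
      obtain ⟨ρ₁, hr₁⟩ := hT q₁ h₁
      obtain ⟨ρ₂, hr₂⟩ := hT q₂ h₂
      have e₁ := 𝒜.isRun_append' u q₀ q₁ ρ₁ s q''' hr₁ hm₁.2
      have e₂ := 𝒜.isRun_append' u q₀ q₂ ρ₂ s q''' hr₂ hm₂.2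
      have hρ : ρ₁ ≠ ρ₂ := by
        intro h
        apply hne
        have g₁ := 𝒜.isRun_getLast' u q₀ q₁ ρ₁ hr₁
        have g₂ := 𝒜.isRun_getLast' u q₀ q₂ ρ₂ hr₂
        rw [h, g₂] at g₁
        exact (Option.some.inj g₁).symm
      exact hND ⟨q₀, q''', u ++ [s], ρ₁ ++ [q'''], ρ₂ ++ [q'''], by
        intro h; exact hρ (List.append_left_injective [q'''] h), e₁, e₂⟩
    have hT'runs : ∀ q''' ∈ T', ∃ ρ, 𝒜.IsRun q₀ (u ++ [s]) ρ q''' := by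
      intro q''' hm
      rw [hT', Finset.mem_biUnion] at hm
      obtain ⟨q'', hq'', hmem⟩ := hm
      simp only [hnext, Finset.mem_filter] at hmem
      obtain ⟨ρ, hr⟩ := hT q'' hq''
      exact ⟨ρ ++ [q'''], 𝒜.isRun_append' u q₀ q'' ρ s q''' hr hmem.2⟩
    have step : ∀ q'' ∈ T, (Bmat 𝒜 M ^ (n+1)) (q'', s) (q', s') =
        ∑ s'', M s s'' * ∑ q''' ∈ next q'', (Bmat 𝒜 M ^ n) (q''', s'') (q', s') := by
      intro q'' _
      rw [pow_succ']
      rw [Matrix.mul_apply]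
      rw [Fintype.sum_prod_type]
      rw [Finset.sum_comm]
      apply Finset.sum_congr rfl
      intro s'' _
      rw [Finset.mul_sum]
      rw [Finset.sum_filter]
      apply Finset.sum_congr rfl
      intro q''' _
      simp only [Bmat, Matrix.of_apply]
      by_cases h : q''' ∈ 𝒜.delta q'' s <;> simp [h]
    calc ∑ q'' ∈ T, (Bmat 𝒜 M ^ (n+1)) (q'', s) (q', s')
        = ∑ q'' ∈ T, ∑ s'', M s s'' * ∑ q''' ∈ next q'', (Bmat 𝒜 M ^ n) (q''', s'') (q', s') :=
          Finset.sum_congr rfl step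
      _ = ∑ s'', M s s'' * ∑ q'' ∈ T, ∑ q''' ∈ next q'', (Bmat 𝒜 M ^ n) (q''', s'') (q', s') := by
          rw [Finset.sum_comm]
          simp [Finset.mul_sum]
      _ = ∑ s'', M s s'' * ∑ q''' ∈ T', (Bmat 𝒜 M ^ n) (q''', s'') (q', s') := by
          apply Finset.sum_congr rfl
          intro s'' _
          rw [hT', Finset.sum_biUnion hdisj]
      _ ≤ ∑ s'', M s s'' * (M ^ n) s'' s' := by
          apply Finset.sum_le_sum
          intro s'' _
          exact mul_le_mul_of_nonneg_left
            (ih s'' s' q' q₀ (u ++ [s]) T' hT'runs) (hM.1 s s'')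
      _ = (M ^ (n+1)) s s' := by rw [pow_succ', Matrix.mul_apply]

end KeyStmt15

lemma pow_entry_nonneg' {V : Type} [Fintype V] [DecidableEq V] {B : Matrix V V ℝ}
    (hB : ∀ p p', 0 ≤ B p p') (n : ℕ) : ∀ p p', 0 ≤ (B ^ n) p p' := by
  induction n with
  | zero => intro p p'; rw [pow_zero, Matrix.one_apply]; split <;> norm_num
  | succ n ih =>
    intro p p'
    rw [pow_succ, Matrix.mul_apply]
    exact Finset.sum_nonneg fun k _ => mul_nonneg (ih p k) (hB k p')

lemma sub_pow_le' {V : Type} [Fintype V] [DecidableEq V] {B : Matrix V V ℝ}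
    (hB : ∀ p p', 0 ≤ B p p') (D : Set V) (n : ℕ) :
    ∀ x y : ↥D, ((B.submatrix (Subtype.val : ↥D → V) Subtype.val) ^ n) x y ≤ (B ^ n) x.val y.val := by
  induction n with
  | zero =>
    intro x y
    rw [pow_zero, pow_zero, Matrix.one_apply, Matrix.one_apply]
    by_cases h : x = y
    · simp [h]
    · have : (x : V) ≠ (y : V) := fun hc => h (Subtype.ext hc)
      simp [h, this]
  | succ n ih =>
    intro x y
    rw [pow_succ', pow_succ', Matrix.mul_apply, Matrix.mul_apply]
    have h1 : ∀ z : ↥D, B.submatrix Subtype.val Subtype.val x z *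
        ((B.submatrix (Subtype.val : ↥D → V) Subtype.val) ^ n) z y ≤
        B x.val z.val * (B ^ n) z.val y.val := by
      intro z
      exact mul_le_mul_of_nonneg_left (ih z y) (hB _ _)
    calc ∑ z : ↥D, B.submatrix Subtype.val Subtype.val x z *
            ((B.submatrix (Subtype.val : ↥D → V) Subtype.val) ^ n) z y
        ≤ ∑ z : ↥D, B x.val z.val * (B ^ n) z.val y.val :=
          Finset.sum_le_sum fun z _ => h1 z
      _ = ∑ v ∈ D.toFinset, B x.val v * (B ^ n) v y.val := by
          rw [← Finset.sum_set_coe (f := fun v => B x.val v * (B ^ n) v y.val)]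
      _ ≤ ∑ v, B x.val v * (B ^ n) v y.val := by
          apply Finset.sum_le_sum_of_subset_of_nonneg (Finset.subset_univ _)
          intro v _ _
          exact mul_nonneg (hB _ _) (pow_entry_nonneg' hB n _ _)

lemma map_pow_complex' {V : Type} [Fintype V] [DecidableEq V] (N : Matrix V V ℝ) (n : ℕ) :
    (N.map Complex.ofReal) ^ n = (N ^ n).map Complex.ofReal := by
  induction n with
  | zero =>
    rw [pow_zero, pow_zero]
    ext i j
    simp [Matrix.one_apply]
    split <;> simp
  | succ n ih =>
    rw [pow_succ, pow_succ, ih]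
    ext i j
    simp [Matrix.mul_apply, Matrix.map_apply]

lemma spec_abs_le_one' {V : Type} [Fintype V] [DecidableEq V] (N : Matrix V V ℝ)
    (hbd : ∀ (k : ℕ) (i j : V), |(N ^ k) i j| ≤ 1) :
    ∀ c ∈ spectrum ℂ (N.map Complex.ofReal), ‖c‖ ≤ 1 := by
  intro c hc
  by_contra hgt
  push_neg at hgt
  set A := N.map Complex.ofReal with hA
  rw [spectrum.mem_iff] at hc
  rw [Matrix.isUnit_iff_isUnit_det, isUnit_iff_ne_zero, not_ne_iff] at hc
  obtain ⟨v, hv0, hv⟩ := Matrix.exists_mulVec_eq_zero_iff.mpr hc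
  have heig : A.mulVec v = c • v := by
    have : (algebraMap ℂ (Matrix V V ℂ)) c = c • 1 := Algebra.algebraMap_eq_smul_one c
    rw [this] at hv
    have := congrArg (fun w => w + A.mulVec v) hv
    simp only [Matrix.sub_mulVec, sub_add_cancel, zero_add] at this
    rw [← this, Matrix.smul_mulVec, Matrix.one_mulVec]
  have hpow : ∀ k : ℕ, (A ^ k).mulVec v = (c ^ k) • v := by
    intro k
    induction k with
    | zero => simp [Matrix.one_mulVec]
    | succ k ih =>
      rw [pow_succ', ← Matrix.mulVec_mulVec, ih, Matrix.mulVec_smul, heig, smul_smul,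
        ← pow_succ]
  obtain ⟨i, hi⟩ : ∃ i, v i ≠ 0 := Function.ne_iff.mp hv0
  set K : ℝ := ∑ j : V, ‖v j‖ with hK
  have hbnd : ∀ k : ℕ, ‖c‖ ^ k * ‖v i‖ ≤ K := by
    intro k
    have h1 : (c ^ k • v) i = ((A ^ k).mulVec v) i := by rw [hpow k]
    calc ‖c‖ ^ k * ‖v i‖ = ‖(c ^ k • v) i‖ := by
          simp [Pi.smul_apply, smul_eq_mul, norm_mul, norm_pow]
      _ = ‖((A ^ k).mulVec v) i‖ := by rw [h1]
      _ = ‖∑ j, (A ^ k) i j * v j‖ := by rw [Matrix.mulVec, dotProduct]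
      _ ≤ ∑ j, ‖(A ^ k) i j * v j‖ := norm_sum_le _ _
      _ = ∑ j, ‖(A ^ k) i j‖ * ‖v j‖ := by
          simp [norm_mul]
      _ ≤ ∑ j, 1 * ‖v j‖ := by
          apply Finset.sum_le_sum
          intro j _
          apply mul_le_mul_of_nonneg_right _ (norm_nonneg _)
          rw [hA, map_pow_complex']
          simp only [Matrix.map_apply]
          rw [Complex.norm_real, Real.norm_eq_abs]
          exact hbd k i j
      _ = K := by simp [hK]
  obtain ⟨k, hk⟩ := pow_unbounded_of_one_lt (K / ‖v i‖) hgt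
  have hvi : 0 < ‖v i‖ := by
    simpa [norm_pos_iff] using hi
  have := hbnd k
  rw [← le_div_iff₀ hvi] at this
  linarith

end AuxStmt15

/-- every SCC `D` of `B` satisfies `ρ(B_{D,D}) ≤ 1`. -/
theorem stmt_15 {Q S : Type} [Fintype Q] [Fintype S]
    (𝒜 : BA Q S) (M : Matrix S S ℝ) (hM : IsMarkov M)
    (hU : 𝒜.Unambiguous) (hND : ¬ 𝒜.HasDiamond) (hAR : 𝒜.AllReachable) :
    ∀ D : Set (Q × S), IsSCC (Bmat 𝒜 M) D →
      specRad (subMat (Bmat 𝒜 M) D) ≤ 1 := by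
  intro D _
  have hBnn : ∀ p p', 0 ≤ Bmat 𝒜 M p p' := bmat_nonneg' hM
  have hBle : ∀ (k : ℕ) (p p' : Q × S), (Bmat 𝒜 M ^ k) p p' ≤ 1 := by
    intro k p p'
    have hrun : ∀ q'' ∈ ({p.1} : Finset Q), ∃ ρ, 𝒜.IsRun p.1 [] ρ q'' := by
      intro q'' hq''
      rw [Finset.mem_singleton] at hq''
      exact ⟨[p.1], hq''.symm, rfl⟩
    have := key_count' 𝒜 M hM hND k p.2 p'.2 p'.1 p.1 [] {p.1} hrun
    rw [Finset.sum_singleton] at this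
    exact le_trans this (markov_pow_le_one' hM k p.2 p'.2)
  have hbd : ∀ (k : ℕ) (i j : ↥D), |((subMat (Bmat 𝒜 M) D) ^ k) i j| ≤ 1 := by
    intro k i j
    rw [abs_le]
    constructor
    · have : (0:ℝ) ≤ ((subMat (Bmat 𝒜 M) D) ^ k) i j := by
        apply pow_entry_nonneg' _ k
        intro p p'
        exact hBnn _ _
      linarith
    · exact le_trans (sub_pow_le' hBnn D k i j) (hBle k _ _)
  apply Real.sSup_le _ zero_le_one
  rintro x ⟨c, hc, rfl⟩
  exact spec_abs_le_one' (subMat (Bmat 𝒜 M) D) hbd c hc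
end
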